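/- arXiv:2312.09724 — 4 statements merged into one kernel-verified Lean document; each statement's English description precedes it below -/
import Mathlib

section
/- Let 1 ≤ p1 ≤ p2 ≤ 2 or 2 ≤ p1 ≤ p2 ≤ ∞, with (p1,p2) ≠ (1,∞). Let α > 0 and β ≥ 0, and let D_σ : ℓ_{p1} → ℓ_{p2} be the diagonal operator generated by the sequence σ_k = k^{−α}(log k)^β for k ≥ 2^{β/α} and σ_k = 1 otherwise. Then there exist constants c1, c2 > 0 such that for all integers k > 1, c1 · k^{−α}(log k)^β ≤ a_k(D_σ : ℓ_{p1} → ℓ_{p2}) ≤ c2 · k^{−α}(log k)^β. -/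
open scoped ENNReal NNReal ComplexConjugate

set_option maxHeartbeats 1000000
set_option synthInstance.maxHeartbeats 400000

/-- The `k`-th approximation number of a bounded linear operator `T : X → Y`:
`a_k(T) = inf { ‖T - A‖ : A : X → Y bounded linear, rank A < k }`. -/
noncomputable def approxNumber {X Y : Type*} [NormedAddCommGroup X] [NormedSpace ℂ X]
    [NormedAddCommGroup Y] [NormedSpace ℂ Y] (k : ℕ) (T : X →L[ℂ] Y) : ℝ :=
  sInf {c : ℝ | ∃ A : X →L[ℂ] Y,
    Module.rank ℂ (LinearMap.range (A : X →ₗ[ℂ] Y)) < (k : Cardinal) ∧ c = ‖T - A‖}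

/-- The sequence `σ_k = k^{-α} (log₂ k)^β` for `k ≥ 2^{β/α}`, and `σ_k = 1` otherwise. -/
noncomputable def diagSeq (α β : ℝ) (k : ℕ) : ℝ :=
  if (2 : ℝ) ^ (β / α) ≤ (k : ℝ) then (k : ℝ) ^ (-α) * Real.logb 2 k ^ β else 1

namespace S0

open Matrix


noncomputable def fff (α β : ℝ) (x : ℝ) : ℝ := x ^ (-α) * Real.logb 2 x ^ β

lemma rpow_neg_anti {x y α : ℝ} (hx : 0 < x) (hxy : x ≤ y) (hα : 0 ≤ α) :
    y ^ (-α) ≤ x ^ (-α) := by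
  rw [Real.rpow_neg hx.le, Real.rpow_neg (hx.trans_le hxy).le]
  exact inv_anti₀ (Real.rpow_pos_of_pos hx α) (Real.rpow_le_rpow hx.le hxy hα)

lemma one_le_logb {x : ℝ} (hx : 2 ≤ x) : 1 ≤ Real.logb 2 x := by
  have h := Real.logb_le_logb_of_le (one_lt_two) (by norm_num : (0:ℝ) < 2) hx
  rwa [Real.logb_self_eq_one one_lt_two] at h

lemma fff_pos {α β x : ℝ} (hx : 2 ≤ x) : 0 < fff α β x := by
  have h1 : (0:ℝ) < x := by linarith
  have h2 : (0:ℝ) < Real.logb 2 x := lt_of_lt_of_le one_pos (one_le_logb hx)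
  exact mul_pos (Real.rpow_pos_of_pos h1 _) (Real.rpow_pos_of_pos h2 _)

lemma fff_nonneg {α β x : ℝ} (hx : 0 ≤ x) (hlb : 0 ≤ Real.logb 2 x) : 0 ≤ fff α β x :=
  mul_nonneg (Real.rpow_nonneg hx _) (Real.rpow_nonneg hlb _)

lemma lemQ {α β : ℝ} (hα : 0 < α) (hβ : 0 ≤ β) :
    ∃ C : ℝ, 1 ≤ C ∧ ∀ x y : ℝ, 2 ≤ x → x ≤ y → fff α β y ≤ C * fff α β x := by
  rcases eq_or_lt_of_le hβ with hβ0 | hβpos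
  · refine ⟨1, le_refl 1, fun x y hx hxy => ?_⟩
    simp only [fff, ← hβ0, Real.rpow_zero, mul_one, one_mul]
    exact rpow_neg_anti (by linarith) hxy hα.le
  · have hlog2 : 0 < Real.log 2 := Real.log_pos one_lt_two
    set K : ℝ := 1 + β / (α * Real.log 2) with hK
    have hK1 : 1 ≤ K := by
      rw [hK]
      have : 0 ≤ β / (α * Real.log 2) := by positivity
      linarith
    refine ⟨K ^ β, Real.one_le_rpow hK1 hβ, fun x y hx hxy => ?_⟩
    have hx0 : (0:ℝ) < x := by linarith
    have hy0 : (0:ℝ) < y := by linarith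
    set t : ℝ := y / x with ht
    have ht1 : 1 ≤ t := (one_le_div hx0).mpr hxy
    have ht0 : 0 < t := lt_of_lt_of_le one_pos ht1
    have hyxt : y = x * t := by rw [ht, mul_comm, div_mul_cancel₀ _ hx0.ne']
    set e : ℝ := α / β with he
    have hte : 1 ≤ t ^ e := Real.one_le_rpow ht1 (by positivity)
    -- key log bound
    have hlogt : Real.logb 2 t ≤ β * t ^ e / (α * Real.log 2) := by
      have h1 : Real.log t ≤ t ^ e / e := Real.log_le_rpow_div ht0.le (by positivity)
      have h2 : t ^ e / e = β * t ^ e / α := by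
        rw [he]; field_simp
      have h3 : β * t ^ e / (α * Real.log 2) = (β * t ^ e / α) / Real.log 2 := by
        rw [div_div]
      rw [Real.logb, h3]
      exact div_le_div_of_nonneg_right (h1.trans_eq h2) hlog2.le
    have hkey : 1 + Real.logb 2 t ≤ K * t ^ e := by
      have : K * t ^ e = t ^ e + (β / (α * Real.log 2)) * t ^ e := by rw [hK]; ring
      rw [this]
      have h3 : Real.logb 2 t ≤ (β / (α * Real.log 2)) * t ^ e := by
        calc Real.logb 2 t ≤ β * t ^ e / (α * Real.log 2) := hlogt
          _ = (β / (α * Real.log 2)) * t ^ e := by ring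
      linarith
    have hlogy : Real.logb 2 y ≤ Real.logb 2 x * (K * t ^ e) := by
      have hsplit : Real.logb 2 y = Real.logb 2 x + Real.logb 2 t := by
        rw [hyxt, Real.logb_mul hx0.ne' ht0.ne']
      have hlx : 1 ≤ Real.logb 2 x := one_le_logb hx
      have hlt0 : 0 ≤ Real.logb 2 t := Real.logb_nonneg one_lt_two ht1
      calc Real.logb 2 y = Real.logb 2 x + Real.logb 2 t := hsplit
        _ ≤ Real.logb 2 x * (1 + Real.logb 2 t) := by nlinarith
        _ ≤ Real.logb 2 x * (K * t ^ e) := by nlinarith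
    have hlogy0 : 0 ≤ Real.logb 2 y := Real.logb_nonneg one_lt_two (by linarith)
    have hpow : Real.logb 2 y ^ β ≤ Real.logb 2 x ^ β * (K ^ β * t ^ α) := by
      have h4 : Real.logb 2 y ^ β ≤ (Real.logb 2 x * (K * t ^ e)) ^ β :=
        Real.rpow_le_rpow hlogy0 hlogy hβ
      have h5 : (Real.logb 2 x * (K * t ^ e)) ^ β
          = Real.logb 2 x ^ β * (K ^ β * (t ^ e) ^ β) := by
        rw [Real.mul_rpow (by linarith [one_le_logb hx]) (by positivity),
          Real.mul_rpow (by linarith : (0:ℝ) ≤ K) (by positivity)]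
      have h6 : (t ^ e) ^ β = t ^ α := by
        rw [← Real.rpow_mul ht0.le, he, div_mul_cancel₀ _ hβpos.ne']
      rw [h5, h6] at h4
      exact h4
    have hyneg : y ^ (-α) = x ^ (-α) * t ^ (-α) := by
      rw [hyxt, Real.mul_rpow hx0.le ht0.le]
    have htt : t ^ (-α) * t ^ α = 1 := by
      rw [← Real.rpow_add ht0]; simp
    calc fff α β y = y ^ (-α) * Real.logb 2 y ^ β := rfl
      _ ≤ y ^ (-α) * (Real.logb 2 x ^ β * (K ^ β * t ^ α)) := by
          apply mul_le_mul_of_nonneg_left hpow (Real.rpow_nonneg hy0.le _)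
      _ = K ^ β * (x ^ (-α) * Real.logb 2 x ^ β) * (t ^ (-α) * t ^ α) := by
          rw [hyneg]; ring
      _ = K ^ β * fff α β x := by rw [htt, mul_one]; rfl




lemma diagSeq_nonneg (α β : ℝ) (m : ℕ) : 0 ≤ diagSeq α β m := by
  unfold diagSeq
  split_ifs with h
  · have hm0 : (0:ℝ) < (m:ℝ) := lt_of_lt_of_le (Real.rpow_pos_of_pos two_pos _) h
    have hm1 : (1:ℝ) ≤ (m:ℝ) := by
      have : (1:ℕ) ≤ m := by exact_mod_cast Nat.one_le_iff_ne_zero.mpr (by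
        rintro rfl; simp at hm0)
      exact_mod_cast this
    exact mul_nonneg (Real.rpow_nonneg hm0.le _)
      (Real.rpow_nonneg (Real.logb_nonneg one_lt_two hm1) _)
  · norm_num

lemma lemA {α β : ℝ} (hα : 0 < α) (hβ : 0 ≤ β) :
    ∃ C2 : ℝ, 0 < C2 ∧ ∀ k m : ℕ, 2 ≤ k → k ≤ m →
      diagSeq α β m ≤ C2 * fff α β k := by
  obtain ⟨C, hC1, hC⟩ := lemQ hα hβ
  refine ⟨C + 2 ^ β, by positivity, fun k m hk hkm => ?_⟩
  have hk2 : (2:ℝ) ≤ (k:ℝ) := by exact_mod_cast hk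
  have hkmR : ((k:ℝ)) ≤ (m:ℝ) := by exact_mod_cast hkm
  have hfk : 0 < fff α β k := fff_pos hk2
  unfold diagSeq
  split_ifs with h
  · have : fff α β m ≤ C * fff α β k := hC _ _ hk2 hkmR
    calc (m:ℝ) ^ (-α) * Real.logb 2 (m:ℝ) ^ β = fff α β m := rfl
      _ ≤ C * fff α β k := this
      _ ≤ (C + 2 ^ β) * fff α β k := by
          have : (0:ℝ) ≤ 2 ^ β := Real.rpow_nonneg (by norm_num) _
          nlinarith
  · -- m < threshold, so k < threshold, so 2^(-β) < k^(-α)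
    push_neg at h
    have hkth : (k:ℝ) < (2:ℝ) ^ (β / α) := lt_of_le_of_lt hkmR h
    have hka : (k:ℝ) ^ α < 2 ^ β := by
      have h1 : ((k:ℝ)) ^ α < ((2:ℝ) ^ (β/α)) ^ α :=
        Real.rpow_lt_rpow (by positivity) hkth hα
      rwa [← Real.rpow_mul (by norm_num : (0:ℝ) ≤ 2), div_mul_cancel₀ _ hα.ne'] at h1
    have hinv : (2:ℝ) ^ (-β) < (k:ℝ) ^ (-α) := by
      rw [Real.rpow_neg (by norm_num : (0:ℝ) ≤ 2), Real.rpow_neg (by positivity)]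
      exact inv_strictAnti₀ (by positivity) hka
    have hlb : (1:ℝ) ≤ Real.logb 2 (k:ℝ) ^ β :=
      Real.one_le_rpow (one_le_logb hk2) hβ
    have hfk' : (2:ℝ) ^ (-β) ≤ fff α β k := by
      calc (2:ℝ) ^ (-β) = 2 ^ (-β) * 1 := by ring
        _ ≤ (k:ℝ) ^ (-α) * Real.logb 2 (k:ℝ) ^ β := by
            apply mul_le_mul hinv.le hlb (by norm_num) (by positivity)
    have h2b : (2:ℝ) ^ β * (2:ℝ) ^ (-β) = 1 := by
      rw [← Real.rpow_add (by norm_num)]; simp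
    calc (1:ℝ) = 2 ^ β * 2 ^ (-β) := h2b.symm
      _ ≤ 2 ^ β * fff α β k := by
          apply mul_le_mul_of_nonneg_left hfk' (Real.rpow_nonneg (by norm_num) _)
      _ ≤ (C + 2 ^ β) * fff α β k := by nlinarith

lemma lemB {α β : ℝ} (hα : 0 < α) (hβ : 0 ≤ β) :
    ∃ c : ℝ, 0 < c ∧ ∀ k m : ℕ, 2 ≤ k → 1 ≤ m → m ≤ 2 * k →
      c * fff α β k ≤ diagSeq α β m := by
  obtain ⟨C, hC1, hC⟩ := lemQ hα hβ
  have hC0 : (0:ℝ) < C := by linarith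
  refine ⟨C⁻¹ * 2 ^ (-α), by positivity, fun k m hk hm hm2k => ?_⟩
  have hk2 : (2:ℝ) ≤ (k:ℝ) := by exact_mod_cast hk
  have hfk : 0 < fff α β k := fff_pos hk2
  have hfmax : fff α β k ≤ C := by
    have h1 : fff α β k ≤ C * fff α β 2 := hC 2 k le_rfl hk2
    have h2 : fff α β 2 = 2 ^ (-α) := by
      unfold fff
      rw [Real.logb_self_eq_one one_lt_two, Real.one_rpow, mul_one]
    have h3 : (2:ℝ) ^ (-α) ≤ 1 :=
      Real.rpow_le_one_of_one_le_of_nonpos (by norm_num) (by linarith)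
    calc fff α β k ≤ C * fff α β 2 := h1
      _ = C * 2 ^ (-α) := by rw [h2]
      _ ≤ C * 1 := by nlinarith
      _ = C := mul_one C
  have hsmall : C⁻¹ * 2 ^ (-α) * fff α β k ≤ 2 ^ (-α) := by
    have h3 : C⁻¹ * fff α β k ≤ 1 := by
      rw [← div_eq_inv_mul, div_le_one hC0]; exact hfmax
    calc C⁻¹ * 2 ^ (-α) * fff α β k = 2 ^ (-α) * (C⁻¹ * fff α β k) := by ring
      _ ≤ 2 ^ (-α) * 1 := by
          apply mul_le_mul_of_nonneg_left h3 (Real.rpow_nonneg (by norm_num) _)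
      _ = 2 ^ (-α) := mul_one _
  have h2a1 : (2:ℝ) ^ (-α) ≤ 1 :=
    Real.rpow_le_one_of_one_le_of_nonpos (by norm_num) (by linarith)
  unfold diagSeq
  split_ifs with h
  · -- diagSeq m = fff m
    rcases Nat.lt_or_ge m 2 with hm1 | hm2
    · -- m = 1, threshold ≤ 1 forces fff m = 1... show directly value ≥
      interval_cases m
      have hth : (2:ℝ) ^ (β/α) ≤ 1 := by simpa using h
      -- LHS ≤ 2^(-α) ≤ 1 = value
      have : ((1:ℕ):ℝ) ^ (-α) * Real.logb 2 ((1:ℕ):ℝ) ^ β = 1 * Real.logb 2 1 ^ β := by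
        norm_num
      have hβ0 : β = 0 := by
        by_contra hb
        have hbpos : 0 < β := lt_of_le_of_ne hβ (Ne.symm hb)
        have h1 : (1:ℝ) < (2:ℝ) ^ (β/α) := by
          have := Real.rpow_lt_rpow_of_exponent_lt (x := 2) one_lt_two
            (y := 0) (z := β/α) (by positivity)
          simpa using this
        linarith
      subst hβ0
      simp only [Nat.cast_one, Real.logb_one, Real.rpow_zero, Real.one_rpow, mul_one]
      calc C⁻¹ * 2 ^ (-α) * fff α 0 k ≤ 2 ^ (-α) := hsmall
        _ ≤ 1 := h2a1
    · have hm2R : (2:ℝ) ≤ (m:ℝ) := by exact_mod_cast hm2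
      rcases le_or_gt m k with hmk | hkm
      · -- 2 ≤ m ≤ k : fff k ≤ C fff m
        have h1 : fff α β k ≤ C * fff α β m := hC _ _ hm2R (by exact_mod_cast hmk)
        have hfm : 0 < fff α β m := fff_pos hm2R
        calc C⁻¹ * 2 ^ (-α) * fff α β k ≤ C⁻¹ * 1 * fff α β k :=
              mul_le_mul_of_nonneg_right
                (mul_le_mul_of_nonneg_left h2a1 (inv_pos.mpr hC0).le) hfk.le
          _ = C⁻¹ * fff α β k := by ring
          _ ≤ fff α β m := by
              rw [← div_eq_inv_mul, div_le_iff₀ hC0]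
              calc fff α β k ≤ C * fff α β m := h1
                _ = fff α β m * C := mul_comm _ _
          _ = (m:ℝ) ^ (-α) * Real.logb 2 (m:ℝ) ^ β := rfl
      · -- k < m ≤ 2k : fff m ≥ 2^{-α} fff k
        have hm2kR : ((m:ℝ)) ≤ 2 * (k:ℝ) := by exact_mod_cast hm2k
        have hma : ((m:ℝ)) ^ (-α) ≥ (2 * (k:ℝ)) ^ (-α) :=
          rpow_neg_anti (by positivity) hm2kR hα.le
        have hlgm : Real.logb 2 (k:ℝ) ^ β ≤ Real.logb 2 (m:ℝ) ^ β := by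
          apply Real.rpow_le_rpow (Real.logb_nonneg one_lt_two (by linarith))
            (Real.logb_le_logb_of_le one_lt_two (by linarith) (by
              exact_mod_cast hkm.le)) hβ
        have h2k : (2 * (k:ℝ)) ^ (-α) = 2 ^ (-α) * (k:ℝ) ^ (-α) := by
          rw [Real.mul_rpow (by norm_num) (by positivity)]
        calc C⁻¹ * 2 ^ (-α) * fff α β k = C⁻¹ * (2 ^ (-α) * fff α β k) := by ring
          _ ≤ 1 * (2 ^ (-α) * fff α β k) := by
              have hc1 : C⁻¹ ≤ 1 := by
                rw [inv_le_one_iff₀]; right; exact hC1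
              exact mul_le_mul_of_nonneg_right hc1
                (mul_nonneg (Real.rpow_nonneg (by norm_num) _) hfk.le)
          _ = 2 ^ (-α) * (k:ℝ) ^ (-α) * Real.logb 2 (k:ℝ) ^ β := by
              unfold fff; ring
          _ = (2 * (k:ℝ)) ^ (-α) * Real.logb 2 (k:ℝ) ^ β := by rw [h2k]
          _ ≤ (m:ℝ) ^ (-α) * Real.logb 2 (m:ℝ) ^ β := by
              apply mul_le_mul hma hlgm (Real.rpow_nonneg
                (Real.logb_nonneg one_lt_two (by linarith)) _) (by positivity)
  · -- diagSeq m = 1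
    calc C⁻¹ * 2 ^ (-α) * fff α β k ≤ 2 ^ (-α) := hsmall
      _ ≤ 1 := h2a1



lemma sum_rpow_le_rpow_sum {s : Finset ℕ} {a : ℕ → ℝ} (ha : ∀ i ∈ s, 0 ≤ a i)
    {r : ℝ} (hr : 1 ≤ r) : ∑ i ∈ s, a i ^ r ≤ (∑ i ∈ s, a i) ^ r := by
  have hr0 : 0 < r := by linarith
  set S := ∑ i ∈ s, a i with hS
  have hS0 : 0 ≤ S := Finset.sum_nonneg ha
  rcases eq_or_lt_of_le hS0 with hSz | hSpos
  · have hz : ∀ i ∈ s, a i = 0 := by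
      intro i hi
      exact (Finset.sum_eq_zero_iff_of_nonneg ha).mp hSz.symm i hi
    have : ∀ i ∈ s, a i ^ r = 0 := fun i hi => by
      rw [hz i hi, Real.zero_rpow hr0.ne']
    rw [Finset.sum_congr rfl this, Finset.sum_const, smul_zero, ← hSz,
      Real.zero_rpow hr0.ne']
  · have hterm : ∀ i ∈ s, a i ^ r ≤ a i * S ^ (r - 1) := by
      intro i hi
      rcases eq_or_lt_of_le (ha i hi) with hz | hpos
      · rw [← hz, Real.zero_rpow hr0.ne', zero_mul]
      · have hiS : a i ≤ S := Finset.single_le_sum ha hi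
        calc a i ^ r = a i ^ (1 + (r-1)) := by ring_nf
          _ = a i ^ (1:ℝ) * a i ^ (r-1) := Real.rpow_add hpos _ _
          _ = a i * a i ^ (r-1) := by rw [Real.rpow_one]
          _ ≤ a i * S ^ (r-1) := by
              apply mul_le_mul_of_nonneg_left
                (Real.rpow_le_rpow (ha i hi) hiS (by linarith)) (ha i hi)
    calc ∑ i ∈ s, a i ^ r ≤ ∑ i ∈ s, a i * S ^ (r-1) := Finset.sum_le_sum hterm
      _ = S * S ^ (r-1) := by rw [← Finset.sum_mul]
      _ = S ^ (1:ℝ) * S ^ (r-1) := by rw [Real.rpow_one]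
      _ = S ^ r := by rw [← Real.rpow_add hSpos]; ring_nf

lemma lemN1 {p q : ℝ≥0∞} [Fact (1 ≤ p)] [Fact (1 ≤ q)] (hpq : p ≤ q)
    (x : lp (fun _ : ℕ => ℂ) p) (u : lp (fun _ : ℕ => ℂ) q) {t : ℝ} (ht : 0 ≤ t)
    (h : ∀ j, ‖u j‖ ≤ t * ‖x j‖) : ‖u‖ ≤ t * ‖x‖ := by
  have hp1 : 1 ≤ p := Fact.out
  have hp0 : p ≠ 0 := by
    intro hz; rw [hz] at hp1; exact absurd hp1 (by simp)
  by_cases hq : q = ∞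
  · subst hq
    apply lp.norm_le_of_forall_le (mul_nonneg ht (norm_nonneg x))
    intro i
    calc ‖u i‖ ≤ t * ‖x i‖ := h i
      _ ≤ t * ‖x‖ := mul_le_mul_of_nonneg_left (lp.norm_apply_le_norm hp0 x i) ht
  · have hq1 : 1 ≤ q := Fact.out
    have hq0 : q ≠ 0 := by
      intro hz; rw [hz] at hq1; exact absurd hq1 (by simp)
    have hqt : 0 < q.toReal := ENNReal.toReal_pos hq0 hq
    have hpfin : p ≠ ∞ := by
      intro hp; rw [hp] at hpq; exact hq (top_le_iff.mp hpq)
    have hpt : 0 < p.toReal := ENNReal.toReal_pos hp0 hpfin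
    have hprq : p.toReal ≤ q.toReal := ENNReal.toReal_mono hq hpq
    apply lp.norm_le_of_forall_sum_le hqt (mul_nonneg ht (norm_nonneg x))
    intro s
    by_cases hx0 : ‖x‖ = 0
    · have hxi : ∀ i, ‖x i‖ = 0 := fun i =>
        le_antisymm (hx0 ▸ lp.norm_apply_le_norm hp0 x i) (norm_nonneg _)
      have hui : ∀ i, ‖u i‖ = 0 := fun i =>
        le_antisymm (by simpa [hxi i] using h i) (norm_nonneg _)
      have : ∀ i ∈ s, ‖u i‖ ^ q.toReal = 0 := fun i _ => by
        rw [hui i, Real.zero_rpow hqt.ne']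
      rw [Finset.sum_congr rfl this, Finset.sum_const, smul_zero, hx0, mul_zero,
        Real.zero_rpow hqt.ne']
    · have hxpos : 0 < ‖x‖ := lt_of_le_of_ne (norm_nonneg _) (Ne.symm hx0)
      have hterm : ∀ i ∈ s, ‖u i‖ ^ q.toReal
          ≤ t ^ q.toReal * (‖x i‖ ^ p.toReal * ‖x‖ ^ (q.toReal - p.toReal)) := by
        intro i _
        have h1 : ‖u i‖ ^ q.toReal ≤ (t * ‖x i‖) ^ q.toReal :=
          Real.rpow_le_rpow (norm_nonneg _) (h i) hqt.le
        have h2 : (t * ‖x i‖) ^ q.toReal = t ^ q.toReal * ‖x i‖ ^ q.toReal :=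
          Real.mul_rpow ht (norm_nonneg _)
        have h3 : ‖x i‖ ^ q.toReal ≤ ‖x i‖ ^ p.toReal * ‖x‖ ^ (q.toReal - p.toReal) := by
          rcases eq_or_lt_of_le (norm_nonneg (x i)) with hz | hpos
          · rw [← hz, Real.zero_rpow hqt.ne', Real.zero_rpow hpt.ne', zero_mul]
          · have hxin : ‖x i‖ ≤ ‖x‖ := lp.norm_apply_le_norm hp0 x i
            calc ‖x i‖ ^ q.toReal = ‖x i‖ ^ p.toReal * ‖x i‖ ^ (q.toReal - p.toReal) := by
                  rw [← Real.rpow_add hpos]; ring_nf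
              _ ≤ ‖x i‖ ^ p.toReal * ‖x‖ ^ (q.toReal - p.toReal) := by
                  apply mul_le_mul_of_nonneg_left
                    (Real.rpow_le_rpow (norm_nonneg _) hxin (by linarith))
                    (Real.rpow_nonneg (norm_nonneg _) _)
        calc ‖u i‖ ^ q.toReal ≤ t ^ q.toReal * ‖x i‖ ^ q.toReal := by rw [← h2]; exact h1
          _ ≤ t ^ q.toReal * (‖x i‖ ^ p.toReal * ‖x‖ ^ (q.toReal - p.toReal)) :=
            mul_le_mul_of_nonneg_left h3 (Real.rpow_nonneg ht _)
      calc ∑ i ∈ s, ‖u i‖ ^ q.toReal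
          ≤ ∑ i ∈ s, t ^ q.toReal * (‖x i‖ ^ p.toReal * ‖x‖ ^ (q.toReal - p.toReal)) :=
            Finset.sum_le_sum hterm
        _ = t ^ q.toReal * ‖x‖ ^ (q.toReal - p.toReal) * ∑ i ∈ s, ‖x i‖ ^ p.toReal := by
            rw [Finset.mul_sum]; congr 1; ext i; ring
        _ ≤ t ^ q.toReal * ‖x‖ ^ (q.toReal - p.toReal) * ‖x‖ ^ p.toReal := by
            apply mul_le_mul_of_nonneg_left (lp.sum_rpow_le_norm_rpow hpt x s)
            positivity
        _ = t ^ q.toReal * ‖x‖ ^ q.toReal := by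
            rw [mul_assoc, ← Real.rpow_add hxpos]; ring_nf
        _ = (t * ‖x‖) ^ q.toReal := (Real.mul_rpow ht (norm_nonneg _)).symm

lemma lemN3 {q : ℝ≥0∞} [Fact (1 ≤ q)] (hq : q ≠ ∞) (hq2 : q ≤ 2)
    (w : lp (fun _ : ℕ => ℂ) q) (s : Finset ℕ) :
    ∑ i ∈ s, ‖w i‖ ^ (2:ℝ) ≤ ‖w‖ ^ (2:ℝ) := by
  have hq1 : 1 ≤ q := Fact.out
  have hq0 : q ≠ 0 := by
    intro hz; rw [hz] at hq1; exact absurd hq1 (by simp)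
  have hqt : 0 < q.toReal := ENNReal.toReal_pos hq0 hq
  have hqt2 : q.toReal ≤ 2 := by
    have := ENNReal.toReal_mono (by norm_num : (2:ℝ≥0∞) ≠ ∞) hq2
    simpa using this
  by_cases hx0 : ‖w‖ = 0
  · have hxi : ∀ i, ‖w i‖ = 0 := fun i =>
      le_antisymm (hx0 ▸ lp.norm_apply_le_norm hq0 w i) (norm_nonneg _)
    have : ∀ i ∈ s, ‖w i‖ ^ (2:ℝ) = 0 := fun i _ => by
      rw [hxi i, Real.zero_rpow (by norm_num)]
    rw [Finset.sum_congr rfl this, Finset.sum_const, smul_zero, hx0,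
      Real.zero_rpow (by norm_num)]
  · have hwpos : 0 < ‖w‖ := lt_of_le_of_ne (norm_nonneg _) (Ne.symm hx0)
    have hterm : ∀ i ∈ s, ‖w i‖ ^ (2:ℝ)
        ≤ ‖w i‖ ^ q.toReal * ‖w‖ ^ (2 - q.toReal) := by
      intro i _
      rcases eq_or_lt_of_le (norm_nonneg (w i)) with hz | hpos
      · rw [← hz, Real.zero_rpow (by norm_num), Real.zero_rpow hqt.ne', zero_mul]
      · have hxin : ‖w i‖ ≤ ‖w‖ := lp.norm_apply_le_norm hq0 w i
        calc ‖w i‖ ^ (2:ℝ) = ‖w i‖ ^ q.toReal * ‖w i‖ ^ (2 - q.toReal) := by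
              rw [← Real.rpow_add hpos]; ring_nf
          _ ≤ ‖w i‖ ^ q.toReal * ‖w‖ ^ (2 - q.toReal) := by
              apply mul_le_mul_of_nonneg_left
                (Real.rpow_le_rpow (norm_nonneg _) hxin (by linarith))
                (Real.rpow_nonneg (norm_nonneg _) _)
    calc ∑ i ∈ s, ‖w i‖ ^ (2:ℝ)
        ≤ ∑ i ∈ s, ‖w i‖ ^ q.toReal * ‖w‖ ^ (2 - q.toReal) := Finset.sum_le_sum hterm
      _ = (∑ i ∈ s, ‖w i‖ ^ q.toReal) * ‖w‖ ^ (2 - q.toReal) := by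
          rw [Finset.sum_mul]
      _ ≤ ‖w‖ ^ q.toReal * ‖w‖ ^ (2 - q.toReal) := by
          apply mul_le_mul_of_nonneg_right (lp.sum_rpow_le_norm_rpow hqt w s)
          positivity
      _ = ‖w‖ ^ (2:ℝ) := by rw [← Real.rpow_add hwpos]; ring_nf

lemma lemN2 {q : ℝ≥0∞} [Fact (1 ≤ q)] (hq2 : (2:ℝ≥0∞) ≤ q)
    (u : lp (fun _ : ℕ => ℂ) q) (n : ℕ) (hu : ∀ m, n ≤ m → u m = 0) :
    ‖u‖ ≤ Real.sqrt (∑ m ∈ Finset.range n, ‖u m‖ ^ (2:ℝ)) := by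
  set S2 := ∑ m ∈ Finset.range n, ‖u m‖ ^ (2:ℝ) with hS2
  have hS2nn : 0 ≤ S2 :=
    Finset.sum_nonneg fun i _ => Real.rpow_nonneg (norm_nonneg _) _
  have hSnn : 0 ≤ Real.sqrt S2 := Real.sqrt_nonneg _
  have hbd : ∀ i, ‖u i‖ ≤ Real.sqrt S2 := by
    intro i
    rcases lt_or_ge i n with hi | hi
    · have h1 : ‖u i‖ ^ (2:ℝ) ≤ S2 :=
        Finset.single_le_sum (f := fun m => ‖u m‖ ^ (2:ℝ))
          (fun m _ => Real.rpow_nonneg (norm_nonneg _) _) (Finset.mem_range.mpr hi)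
      have h2 : Real.sqrt (‖u i‖ ^ (2:ℝ)) = ‖u i‖ := by
        rw [show ((2:ℝ)) = ((2:ℕ):ℝ) by norm_num, Real.rpow_natCast]
        exact Real.sqrt_sq (norm_nonneg _)
      calc ‖u i‖ = Real.sqrt (‖u i‖ ^ (2:ℝ)) := h2.symm
        _ ≤ Real.sqrt S2 := Real.sqrt_le_sqrt h1
    · rw [hu i hi]; simpa using hSnn
  by_cases hq : q = ∞
  · subst hq
    exact lp.norm_le_of_forall_le hSnn hbd
  · have hqt2 : (2:ℝ) ≤ q.toReal := by
      have := ENNReal.toReal_mono hq hq2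
      simpa using this
    have hqt : 0 < q.toReal := by linarith
    apply lp.norm_le_of_forall_sum_le hqt hSnn
    intro s
    have hzero : ∀ i ∈ s, i ∉ s ∩ Finset.range n → ‖u i‖ ^ q.toReal = 0 := by
      intro i hi hni
      have : ¬ i < n := fun hlt => hni (Finset.mem_inter.mpr ⟨hi, Finset.mem_range.mpr hlt⟩)
      rw [hu i (le_of_not_gt this), norm_zero, Real.zero_rpow hqt.ne']
    have h1 : ∑ i ∈ s, ‖u i‖ ^ q.toReal = ∑ i ∈ s ∩ Finset.range n, ‖u i‖ ^ q.toReal :=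
      (Finset.sum_subset Finset.inter_subset_left (fun i hi hni => hzero i hi hni)).symm
    have h2 : ∑ i ∈ s ∩ Finset.range n, ‖u i‖ ^ q.toReal
        ≤ ∑ i ∈ Finset.range n, ‖u i‖ ^ q.toReal :=
      Finset.sum_le_sum_of_subset_of_nonneg Finset.inter_subset_right
        (fun i _ _ => Real.rpow_nonneg (norm_nonneg _) _)
    have h3 : ∑ i ∈ Finset.range n, ‖u i‖ ^ q.toReal
        = ∑ i ∈ Finset.range n, (‖u i‖ ^ (2:ℝ)) ^ (q.toReal / 2) := by
      apply Finset.sum_congr rfl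
      intro i _
      rw [← Real.rpow_mul (norm_nonneg _)]
      congr 1
      ring
    have h4 : ∑ i ∈ Finset.range n, (‖u i‖ ^ (2:ℝ)) ^ (q.toReal / 2) ≤ S2 ^ (q.toReal / 2) :=
      sum_rpow_le_rpow_sum (fun i _ => Real.rpow_nonneg (norm_nonneg _) _)
        (by linarith)
    have h5 : Real.sqrt S2 ^ q.toReal = S2 ^ (q.toReal / 2) := by
      rw [Real.sqrt_eq_rpow, ← Real.rpow_mul hS2nn]
      congr 1
      ring
    rw [h1, h5]
    exact le_trans h2 (le_trans (le_of_eq h3) h4)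

local notation "⟪" x ", " y "⟫" => @inner ℂ _ _ x y

lemma lemHS {n : ℕ} (σ' : Fin n → ℝ) (c : ℝ) (hc : 0 ≤ c) (hσ : ∀ j, c ≤ σ' j)
    (W : Submodule ℂ (Fin n → ℂ)) (v b : Fin n → Fin n → ℂ)
    (hb : ∀ j, b j ∈ W)
    (hv : ∀ j i, v j i = (if i = j then (σ' j : ℂ) else 0) - b j i) :
    ((n : ℝ) - (Module.finrank ℂ W : ℝ)) * c ^ 2 ≤ ∑ j, ∑ i, ‖v j i‖ ^ 2 := by
  classical
  set E := EuclideanSpace ℂ (Fin n)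
  set eL : (Fin n → ℂ) ≃ₗ[ℂ] E := (WithLp.linearEquiv 2 ℂ (Fin n → ℂ)).symm with heL
  set WE : Submodule ℂ E := W.map (eL : (Fin n → ℂ) →ₗ[ℂ] E) with hWE
  have hfr : Module.finrank ℂ WE = Module.finrank ℂ W := LinearEquiv.finrank_map_eq eL W
  set U : Submodule ℂ E := WEᗮ with hU
  have hrk : Module.finrank ℂ WE + Module.finrank ℂ U = n := by
    rw [hU, Submodule.finrank_add_finrank_orthogonal]
    simp [E]
  set m := Module.finrank ℂ U with hm
  set u := stdOrthonormalBasis ℂ U with hu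
  have hon : Orthonormal ℂ (fun i => ((u i : U) : E)) :=
    u.orthonormal.comp_linearIsometry U.subtypeₗᵢ
  -- decomposition of the vectors
  have hsplit : ∀ j, eL (v j) = (σ' j : ℂ) • EuclideanSpace.single j (1:ℂ) - eL (b j) := by
    intro j
    apply PiLp.ext
    intro i
    have h1 : eL (v j) i = v j i := rfl
    have h2 : eL (b j) i = b j i := rfl
    have h3 : ((σ' j : ℂ) • EuclideanSpace.single j (1:ℂ) - eL (b j)) i
        = (σ' j : ℂ) * (EuclideanSpace.single j (1:ℂ)) i - b j i := rfl
    rw [h1, h3, hv j i, EuclideanSpace.single_apply]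
    simp [mul_ite]
  -- inner products
  have hinner : ∀ i j, ⟪((u i : U) : E), eL (v j)⟫ = (σ' j : ℂ) * conj (((u i : U) : E) j) := by
    intro i j
    rw [hsplit j, inner_sub_right, inner_smul_right]
    have hb0 : ⟪((u i : U) : E), eL (b j)⟫ = 0 := by
      apply Submodule.inner_left_of_mem_orthogonal (K := WE)
      · exact Submodule.mem_map_of_mem (hb j)
      · exact (u i).2
    rw [hb0, sub_zero, EuclideanSpace.inner_single_right]
    ring
  -- Bessel per column
  have hbessel : ∀ j, ∑ i : Fin m, ‖⟪((u i : U) : E), eL (v j)⟫‖ ^ 2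
      ≤ ∑ i, ‖v j i‖ ^ 2 := by
    intro j
    have h1 := hon.sum_inner_products_le (eL (v j)) (s := Finset.univ)
    have h2 : ‖eL (v j)‖ ^ 2 = ∑ i, ‖v j i‖ ^ 2 := by
      rw [EuclideanSpace.norm_eq]
      rw [Real.sq_sqrt (Finset.sum_nonneg fun i _ => sq_nonneg _)]
      exact Finset.sum_congr rfl fun i _ => rfl
    rwa [h2] at h1
  -- lower bound per row
  have hrow : ∀ i : Fin m, (c:ℝ) ^ 2 ≤ ∑ j, ‖⟪((u i : U) : E), eL (v j)⟫‖ ^ 2 := by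
    intro i
    have hterm : ∀ j, c ^ 2 * ‖((u i : U) : E) j‖ ^ 2
        ≤ ‖⟪((u i : U) : E), eL (v j)⟫‖ ^ 2 := by
      intro j
      rw [hinner i j]
      rw [norm_mul, Complex.norm_real, RCLike.norm_conj, Real.norm_eq_abs]
      have hσj : |σ' j| = σ' j := abs_of_nonneg (hc.trans (hσ j))
      rw [hσj, mul_pow]
      apply mul_le_mul_of_nonneg_right _ (sq_nonneg _)
      have := hσ j
      nlinarith
    have hsum : ∑ j, c ^ 2 * ‖((u i : U) : E) j‖ ^ 2 = c ^ 2 := by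
      rw [← Finset.mul_sum]
      have hn : ∑ j, ‖((u i : U) : E) j‖ ^ 2 = ‖((u i : U) : E)‖ ^ 2 := by
        rw [EuclideanSpace.norm_eq, Real.sq_sqrt (Finset.sum_nonneg fun i _ => sq_nonneg _)]
      rw [hn]
      have h1 : ‖((u i : U) : E)‖ = 1 := by
        have := hon.1 i
        simpa using this
      rw [h1]; norm_num
    calc c ^ 2 = ∑ j, c ^ 2 * ‖((u i : U) : E) j‖ ^ 2 := hsum.symm
      _ ≤ ∑ j, ‖⟪((u i : U) : E), eL (v j)⟫‖ ^ 2 := Finset.sum_le_sum fun j _ => hterm j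
  -- combine
  have hmain : (m : ℝ) * c ^ 2 ≤ ∑ j, ∑ i, ‖v j i‖ ^ 2 := by
    calc (m : ℝ) * c ^ 2 = ∑ _i : Fin m, c ^ 2 := by
          rw [Finset.sum_const]; simp [mul_comm]
      _ ≤ ∑ i : Fin m, ∑ j, ‖⟪((u i : U) : E), eL (v j)⟫‖ ^ 2 :=
          Finset.sum_le_sum fun i _ => hrow i
      _ = ∑ j, ∑ i : Fin m, ‖⟪((u i : U) : E), eL (v j)⟫‖ ^ 2 := Finset.sum_comm
      _ ≤ ∑ j, ∑ i, ‖v j i‖ ^ 2 := Finset.sum_le_sum fun j _ => hbessel j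
  have hcast : ((n : ℝ) - (Module.finrank ℂ W : ℝ)) ≤ (m : ℝ) := by
    have : (Module.finrank ℂ W : ℝ) + (m : ℝ) = (n : ℝ) := by
      exact_mod_cast (hfr ▸ hrk)
    linarith
  calc ((n : ℝ) - (Module.finrank ℂ W : ℝ)) * c ^ 2 ≤ (m:ℝ) * c ^ 2 :=
        mul_le_mul_of_nonneg_right hcast (sq_nonneg c)
    _ ≤ _ := hmain


lemma one_le_fact_ne_zero (p : ℝ≥0∞) [Fact (1 ≤ p)] : p ≠ 0 := by
  have h : (1:ℝ≥0∞) ≤ p := Fact.out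
  intro hz; rw [hz] at h; exact absurd h (by simp)

variable {p1 p2 : ℝ≥0∞} [Fact (1 ≤ p1)] [Fact (1 ≤ p2)]


/-- coordinate functional on lp -/
noncomputable def coordCLM (p : ℝ≥0∞) [Fact (1 ≤ p)] (j : ℕ) :
    lp (fun _ : ℕ => ℂ) p →L[ℂ] ℂ :=
  LinearMap.mkContinuous
    { toFun := fun x => x j
      map_add' := fun x y => by simp
      map_smul' := fun c x => by simp }
    1 (fun x => by
      show ‖x j‖ ≤ 1 * ‖x‖
      simpa using lp.norm_apply_le_norm (one_le_fact_ne_zero p) x j)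

@[simp] lemma coordCLM_apply (p : ℝ≥0∞) [Fact (1 ≤ p)] (j : ℕ)
    (x : lp (fun _ : ℕ => ℂ) p) : coordCLM p j x = x j := rfl

lemma approxNumber_le {X Y : Type*} [NormedAddCommGroup X] [NormedSpace ℂ X]
    [NormedAddCommGroup Y] [NormedSpace ℂ Y] (k : ℕ) (T A : X →L[ℂ] Y)
    (hA : Module.rank ℂ (LinearMap.range (A : X →ₗ[ℂ] Y)) < (k : Cardinal)) :
    approxNumber k T ≤ ‖T - A‖ := by
  apply csInf_le
  · refine ⟨0, fun c hc => ?_⟩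
    obtain ⟨B, _, rfl⟩ := hc
    exact norm_nonneg _
  · exact ⟨A, hA, rfl⟩

lemma upper_bound {α β : ℝ} (hpq : p1 ≤ p2)
    (D : lp (fun _ : ℕ => ℂ) p1 →L[ℂ] lp (fun _ : ℕ => ℂ) p2)
    (hD : ∀ (x : lp (fun _ : ℕ => ℂ) p1) (m : ℕ), D x m = (diagSeq α β (m + 1) : ℂ) * x m)
    (k : ℕ) (hk : 2 ≤ k) (t : ℝ) (ht : 0 ≤ t)
    (hbound : ∀ m : ℕ, k ≤ m → diagSeq α β m ≤ t) :
    approxNumber k D ≤ t := by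
  classical
  set g : ℕ → lp (fun _ : ℕ => ℂ) p2 :=
    fun j => lp.single p2 j ((diagSeq α β (j + 1) : ℂ)) with hg
  set P : lp (fun _ : ℕ => ℂ) p1 →L[ℂ] lp (fun _ : ℕ => ℂ) p2 :=
    ∑ j ∈ Finset.range (k - 1), (coordCLM p1 j).smulRight (g j) with hP
  have hPapp : ∀ x m, P x m = if m < k - 1 then (diagSeq α β (m + 1) : ℂ) * x m else 0 := by
    intro x m
    have h1 : P x = ∑ j ∈ Finset.range (k - 1), (x j) • g j := by
      rw [hP, ContinuousLinearMap.sum_apply]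
      exact Finset.sum_congr rfl fun j _ => rfl
    have h2 : P x m = ∑ j ∈ Finset.range (k - 1), (x j) • (g j m) := by
      rw [h1, lp.coeFn_sum, Finset.sum_apply]
      exact Finset.sum_congr rfl fun j _ => rfl
    rw [h2]
    have h3 : ∀ j, (x j) • (g j m) = if m = j then (diagSeq α β (j+1) : ℂ) * x m else 0 := by
      intro j
      rw [hg]
      simp only [lp.single_apply]
      by_cases hmj : m = j
      · subst hmj; simp [smul_eq_mul]; ring
      · simp [hmj]
    rw [Finset.sum_congr rfl fun j _ => h3 j, Finset.sum_ite_eq]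
    by_cases hm : m ∈ Finset.range (k-1)
    · rw [if_pos hm, if_pos (Finset.mem_range.mp hm)]
    · rw [if_neg hm, if_neg (fun h => hm (Finset.mem_range.mpr h))]
  -- rank bound
  have hrank : Module.rank ℂ (LinearMap.range
      ((P : lp (fun _ : ℕ => ℂ) p1 →ₗ[ℂ] lp (fun _ : ℕ => ℂ) p2))) < (k : Cardinal) := by
    have hle : LinearMap.range (P : lp (fun _ : ℕ => ℂ) p1 →ₗ[ℂ] lp (fun _ : ℕ => ℂ) p2)
        ≤ Submodule.span ℂ (Set.range fun j : Fin (k-1) => g (j : ℕ)) := by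
      rintro y ⟨x, rfl⟩
      have h1 : P x = ∑ j ∈ Finset.range (k - 1), (x j) • g j := by
        rw [hP, ContinuousLinearMap.sum_apply]
        exact Finset.sum_congr rfl fun j _ => rfl
      show P x ∈ _
      rw [h1]
      apply Submodule.sum_mem
      intro j hj
      apply Submodule.smul_mem
      apply Submodule.subset_span
      exact ⟨⟨j, Finset.mem_range.mp hj⟩, rfl⟩
    calc Module.rank ℂ (LinearMap.range (P : lp (fun _ : ℕ => ℂ) p1 →ₗ[ℂ]
            lp (fun _ : ℕ => ℂ) p2))
        ≤ Module.rank ℂ (Submodule.span ℂ (Set.range fun j : Fin (k-1) => g (j : ℕ))) :=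
          Submodule.rank_mono hle
      _ ≤ Cardinal.mk (Set.range fun j : Fin (k-1) => g (j : ℕ)) := rank_span_le _
      _ ≤ Cardinal.mk (Fin (k-1)) := Cardinal.mk_range_le
      _ = ((k-1 : ℕ) : Cardinal) := by simp
      _ < (k : Cardinal) := by
          have : k - 1 < k := Nat.sub_lt (by omega) one_pos
          exact_mod_cast this
  -- norm bound
  have hnorm : ‖D - P‖ ≤ t := by
    apply ContinuousLinearMap.opNorm_le_bound _ ht
    intro x
    apply lemN1 hpq x ((D - P) x) ht
    intro m
    have h1 : ((D - P) x) m = D x m - P x m := by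
      rw [ContinuousLinearMap.sub_apply, lp.coeFn_sub, Pi.sub_apply]
    rw [h1, hD x m, hPapp x m]
    by_cases hm : m < k - 1
    · rw [if_pos hm]
      simp only [sub_self, norm_zero]
      positivity
    · rw [if_neg hm, sub_zero, norm_mul, Complex.norm_real]
      have hk1 : k ≤ m + 1 := by omega
      have := hbound (m+1) hk1
      have hnn := diagSeq_nonneg α β (m+1)
      rw [Real.norm_eq_abs, abs_of_nonneg hnn]
      exact mul_le_mul_of_nonneg_right this (norm_nonneg _)
  exact le_trans (approxNumber_le k D P hrank) hnorm

lemma single_coe (p : ℝ≥0∞) (j m : ℕ) (a : ℂ) :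
    (lp.single p j a : ∀ _ : ℕ, ℂ) m = if m = j then a else 0 := by
  rw [lp.single_apply, Pi.single_apply]

/-- the coordinate restriction map -/
noncomputable def restr (p : ℝ≥0∞) (n : ℕ) :
    lp (fun _ : ℕ => ℂ) p →ₗ[ℂ] (Fin n → ℂ) where
  toFun := fun w => fun i => w (i : ℕ)
  map_add' := fun w₁ w₂ => by funext i; simp
  map_smul' := fun c w => by funext i; simp

@[simp] lemma restr_apply (p : ℝ≥0∞) (n : ℕ) (w : lp (fun _ : ℕ => ℂ) p) (i : Fin n) :
    restr p n w i = w (i : ℕ) := rfl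

lemma sqrt_half_le {c T : ℝ} (hc : 0 ≤ c) (hT : 0 ≤ T) {S : ℝ}
    (h1 : c ^ 2 / 2 ≤ S) (h2 : Real.sqrt S ≤ T) : c / Real.sqrt 2 ≤ T := by
  have h3 : c / Real.sqrt 2 = Real.sqrt (c ^ 2 / 2) := by
    rw [show c^2/2 = (c/Real.sqrt 2)^2 by
      rw [div_pow, Real.sq_sqrt (by norm_num : (0:ℝ) ≤ 2)]]
    rw [Real.sqrt_sq (div_nonneg hc (Real.sqrt_nonneg 2))]
  rw [h3]
  exact le_trans (Real.sqrt_le_sqrt h1) h2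

lemma lower_bound {α β : ℝ} (hpq : p1 ≤ p2) (hcase : p2 ≤ 2 ∨ 2 ≤ p1)
    (D : lp (fun _ : ℕ => ℂ) p1 →L[ℂ] lp (fun _ : ℕ => ℂ) p2)
    (hD : ∀ (x : lp (fun _ : ℕ => ℂ) p1) (m : ℕ), D x m = (diagSeq α β (m + 1) : ℂ) * x m)
    (k : ℕ) (hk : 2 ≤ k) (c : ℝ) (hc : 0 ≤ c)
    (hσc : ∀ m : ℕ, 1 ≤ m → m ≤ 2*k → c ≤ diagSeq α β m) :
    c / Real.sqrt 2 ≤ approxNumber k D := by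
  classical
  have hp10 : p1 ≠ 0 := one_le_fact_ne_zero p1
  have hp20 : p2 ≠ 0 := one_le_fact_ne_zero p2
  apply le_csInf
  · refine ⟨‖D - 0‖, 0, ?_, rfl⟩
    have : (((0 : lp (fun _ : ℕ => ℂ) p1 →L[ℂ] lp (fun _ : ℕ => ℂ) p2)) :
        lp (fun _ : ℕ => ℂ) p1 →ₗ[ℂ] lp (fun _ : ℕ => ℂ) p2) = 0 := rfl
    rw [this, LinearMap.range_zero]
    have h0 : Module.rank ℂ (⊥ : Submodule ℂ (lp (fun _ : ℕ => ℂ) p2)) = 0 := rank_bot _ _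
    rw [h0]
    exact_mod_cast Nat.pos_of_ne_zero (by omega)
  rintro y ⟨A, hA, rfl⟩
  set n := 2 * k with hn
  have hn0 : 0 < n := by omega
  haveI : Nonempty (Fin n) := ⟨⟨0, hn0⟩⟩
  set e : ℕ → lp (fun _ : ℕ => ℂ) p1 := fun j => lp.single p1 j 1 with he
  have hDe : ∀ j i : ℕ, D (e j) i = if i = j then (diagSeq α β (j + 1) : ℂ) else 0 := by
    intro j i
    rw [hD, he]
    simp only [single_coe]
    by_cases h : i = j
    · subst h; simp
    · simp [h]
  set σ' : Fin n → ℝ := fun j => diagSeq α β ((j : ℕ) + 1) with hσ'def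
  have hσ' : ∀ j : Fin n, c ≤ σ' j := by
    intro j
    exact hσc ((j:ℕ)+1) (by omega) (by have := j.2; omega)
  -- the submodule W
  set W : Submodule ℂ (Fin n → ℂ) :=
    Submodule.map (restr p2 n) (LinearMap.range
      (A : lp (fun _ : ℕ => ℂ) p1 →ₗ[ℂ] lp (fun _ : ℕ => ℂ) p2)) with hW
  have hfrW : Module.finrank ℂ W ≤ k - 1 := by
    have h1 : Module.rank ℂ W ≤ Module.rank ℂ (LinearMap.range
        (A : lp (fun _ : ℕ => ℂ) p1 →ₗ[ℂ] lp (fun _ : ℕ => ℂ) p2)) :=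
      rank_map_le _ _
    have h2 : Module.rank ℂ W < (k : Cardinal) := lt_of_le_of_lt h1 hA
    have h3 : ((Module.finrank ℂ W : ℕ) : Cardinal) = Module.rank ℂ W :=
      Module.finrank_eq_rank ℂ W
    have h4 : Module.finrank ℂ W < k := by
      rw [← h3] at h2
      exact_mod_cast h2
    omega
  have hfrWR : (Module.finrank ℂ W : ℝ) ≤ (k : ℝ) - 1 := by
    have := hfrW
    have h5 : ((Module.finrank ℂ W : ℕ) : ℝ) ≤ ((k - 1 : ℕ) : ℝ) := by exact_mod_cast this
    rw [Nat.cast_sub (by omega)] at h5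
    simpa using h5
  rcases hcase with hc2 | hc1
  · -- Case I : p2 ≤ 2, column argument
    have hp2top : p2 ≠ ∞ := by
      intro h; rw [h] at hc2; exact absurd hc2 (by simp)
    have hp1top : p1 ≠ ∞ := by
      intro h; rw [h] at hpq; exact hp2top (top_le_iff.mp hpq)
    have hp1t : 0 < p1.toReal := ENNReal.toReal_pos hp10 hp1top
    set v : Fin n → Fin n → ℂ := fun j i => ((D - A) (e (j:ℕ))) (i:ℕ) with hv
    set b : Fin n → Fin n → ℂ := fun j => restr p2 n (A (e (j:ℕ))) with hb
    have hbW : ∀ j, b j ∈ W := fun j =>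
      Submodule.mem_map_of_mem ⟨e (j:ℕ), rfl⟩
    have hveq : ∀ j i : Fin n, v j i = (if i = j then (σ' j : ℂ) else 0) - b j i := by
      intro j i
      have h1 : v j i = D (e (j:ℕ)) (i:ℕ) - A (e (j:ℕ)) (i:ℕ) := by
        show ((D - A) (e (j:ℕ))) (i:ℕ) = _
        rw [ContinuousLinearMap.sub_apply, lp.coeFn_sub, Pi.sub_apply]
      have h2 : b j i = A (e (j:ℕ)) (i:ℕ) := rfl
      rw [h1, h2, hDe]
      congr 1
      by_cases h : i = j
      · subst h; rw [if_pos rfl, if_pos rfl]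
      · rw [if_neg (fun hij => h (Fin.ext hij)), if_neg h]
    have hHS := lemHS σ' c hc hσ' W v b hbW hveq
    -- extract a good column
    have hexists : ∃ j : Fin n, c ^ 2 / 2 ≤ ∑ i, ‖v j i‖ ^ 2 := by
      have htot : ∑ _j : Fin n, (c ^ 2 / 2) ≤ ∑ j, ∑ i, ‖v j i‖ ^ 2 := by
        have hlhs : ∑ _j : Fin n, (c ^ 2 / 2) = (n : ℝ) * (c ^ 2 / 2) := by
          rw [Finset.sum_const, Finset.card_univ, Fintype.card_fin, nsmul_eq_mul]
        rw [hlhs]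
        have hge : ((k:ℝ) + 1) * c ^ 2 ≤ ((n : ℝ) - (Module.finrank ℂ W : ℝ)) * c ^ 2 := by
          apply mul_le_mul_of_nonneg_right _ (sq_nonneg c)
          have : (n : ℝ) = 2 * (k:ℝ) := by exact_mod_cast rfl
          linarith
        have hkc : (n : ℝ) * (c ^ 2 / 2) ≤ ((k:ℝ) + 1) * c ^ 2 := by
          have : (n : ℝ) = 2 * (k:ℝ) := by exact_mod_cast rfl
          rw [this]
          nlinarith [sq_nonneg c]
        linarith [hHS]
      obtain ⟨j, _, hj⟩ := Finset.exists_le_of_sum_le Finset.univ_nonempty htot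
      exact ⟨j, hj⟩
    obtain ⟨j, hj⟩ := hexists
    -- bound the column sum by the operator norm
    have hnorme : ‖e (j:ℕ)‖ = 1 := by
      rw [he]
      simpa using lp.norm_single (E := fun _ : ℕ => ℂ) (pos_iff_ne_zero.mpr hp10) (j:ℕ) (1:ℂ)
    have hwn : Real.sqrt (∑ i, ‖v j i‖ ^ 2) ≤ ‖D - A‖ := by
      have h1 : ∑ i : Fin n, ‖v j i‖ ^ 2
          = ∑ i ∈ Finset.range n, ‖((D - A) (e (j:ℕ))) i‖ ^ (2:ℝ) := by
        rw [← Fin.sum_univ_eq_sum_range (fun i => ‖((D - A) (e (j:ℕ))) i‖ ^ (2:ℝ)) n]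
        exact Finset.sum_congr rfl fun i _ => by rw [Real.rpow_two]
      have h2 : ∑ i ∈ Finset.range n, ‖((D - A) (e (j:ℕ))) i‖ ^ (2:ℝ)
          ≤ ‖(D - A) (e (j:ℕ))‖ ^ (2:ℝ) := lemN3 hp2top hc2 _ _
      have h3 : Real.sqrt (∑ i, ‖v j i‖ ^ 2) ≤ Real.sqrt (‖(D - A) (e (j:ℕ))‖ ^ (2:ℝ)) := by
        apply Real.sqrt_le_sqrt
        rw [h1]; exact h2
      have h4 : Real.sqrt (‖(D - A) (e (j:ℕ))‖ ^ (2:ℝ)) = ‖(D - A) (e (j:ℕ))‖ := by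
        rw [Real.rpow_two]
        exact Real.sqrt_sq (norm_nonneg _)
      rw [h4] at h3
      calc Real.sqrt (∑ i, ‖v j i‖ ^ 2) ≤ ‖(D - A) (e (j:ℕ))‖ := h3
        _ ≤ ‖D - A‖ * ‖e (j:ℕ)‖ := ContinuousLinearMap.le_opNorm _ _
        _ = ‖D - A‖ := by rw [hnorme, mul_one]
    exact sqrt_half_le hc (norm_nonneg _) hj hwn
  · -- Case II : 2 ≤ p1, row argument
    set N : Matrix (Fin n) (Fin n) ℂ :=
      Matrix.of (fun i j : Fin n => (A (e (j:ℕ))) (i:ℕ)) with hNdef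
    set W' : Submodule ℂ (Fin n → ℂ) := LinearMap.range (Nᵀ.mulVecLin) with hW'
    have hcol : ∀ j : Fin n, Nᵀ j = restr p2 n (A (e (j:ℕ))) := by
      intro j; funext i; rfl
    have hrange : LinearMap.range (N.mulVecLin) ≤ W := by
      rw [Matrix.range_mulVecLin, Submodule.span_le]
      rintro _ ⟨j, rfl⟩
      rw [show N.col j = restr p2 n (A (e (j:ℕ))) from hcol j]
      exact Submodule.mem_map_of_mem ⟨e (j:ℕ), rfl⟩
    have hfrW' : Module.finrank ℂ W' ≤ k - 1 := by
      have h1 : Module.finrank ℂ W' = Nᵀ.rank := rfl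
      have h2 : Nᵀ.rank = N.rank := Matrix.rank_transpose N
      have h3 : N.rank ≤ Module.finrank ℂ W := Submodule.finrank_mono hrange
      omega
    have hfrW'R : (Module.finrank ℂ W' : ℝ) ≤ (k : ℝ) - 1 := by
      have h5 : ((Module.finrank ℂ W' : ℕ) : ℝ) ≤ ((k - 1 : ℕ) : ℝ) := by exact_mod_cast hfrW'
      rw [Nat.cast_sub (by omega)] at h5
      simpa using h5
    set v : Fin n → Fin n → ℂ := fun i j => ((D - A) (e (j:ℕ))) (i:ℕ) with hv
    set b' : Fin n → Fin n → ℂ := fun i => N i with hb'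
    have hb'W : ∀ i, b' i ∈ W' := by
      intro i
      refine ⟨Pi.single i 1, ?_⟩
      rw [Matrix.mulVecLin_apply, Matrix.mulVec_single_one]; rfl
    have hveq : ∀ i j : Fin n, v i j = (if j = i then (σ' i : ℂ) else 0) - b' i j := by
      intro i j
      have h1 : v i j = D (e (j:ℕ)) (i:ℕ) - A (e (j:ℕ)) (i:ℕ) := by
        show ((D - A) (e (j:ℕ))) (i:ℕ) = _
        rw [ContinuousLinearMap.sub_apply, lp.coeFn_sub, Pi.sub_apply]
      have h2 : b' i j = A (e (j:ℕ)) (i:ℕ) := rfl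
      rw [h1, h2, hDe]
      congr 1
      by_cases h : j = i
      · subst h; rw [if_pos rfl, if_pos rfl]
      · rw [if_neg (fun hij => h (Fin.ext hij.symm)), if_neg h]
    have hHS := lemHS σ' c hc hσ' W' v b' hb'W hveq
    have hexists : ∃ i : Fin n, c ^ 2 / 2 ≤ ∑ j, ‖v i j‖ ^ 2 := by
      have htot : ∑ _j : Fin n, (c ^ 2 / 2) ≤ ∑ i, ∑ j, ‖v i j‖ ^ 2 := by
        have hlhs : ∑ _j : Fin n, (c ^ 2 / 2) = (n : ℝ) * (c ^ 2 / 2) := by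
          rw [Finset.sum_const, Finset.card_univ, Fintype.card_fin, nsmul_eq_mul]
        rw [hlhs]
        have hge : ((k:ℝ) + 1) * c ^ 2 ≤ ((n : ℝ) - (Module.finrank ℂ W' : ℝ)) * c ^ 2 := by
          apply mul_le_mul_of_nonneg_right _ (sq_nonneg c)
          have : (n : ℝ) = 2 * (k:ℝ) := by exact_mod_cast rfl
          linarith
        have hkc : (n : ℝ) * (c ^ 2 / 2) ≤ ((k:ℝ) + 1) * c ^ 2 := by
          have : (n : ℝ) = 2 * (k:ℝ) := by exact_mod_cast rfl
          rw [this]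
          nlinarith [sq_nonneg c]
        linarith [hHS]
      obtain ⟨i, _, hi⟩ := Finset.exists_le_of_sum_le Finset.univ_nonempty htot
      exact ⟨i, hi⟩
    obtain ⟨i, hi⟩ := hexists
    set S : ℝ := ∑ j, ‖v i j‖ ^ 2 with hS
    have hSnn : 0 ≤ S := Finset.sum_nonneg fun j _ => sq_nonneg _
    set x : lp (fun _ : ℕ => ℂ) p1 :=
      ∑ j : Fin n, (conj (v i j)) • e (j:ℕ) with hx
    have hxco : ∀ m : ℕ, x m
        = ∑ j : Fin n, (if m = (j:ℕ) then conj (v i j) else 0) := by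
      intro m
      have h1 : x m = ∑ j : Fin n, ((conj (v i j)) • e (j:ℕ) : lp (fun _ : ℕ => ℂ) p1) m := by
        rw [hx, lp.coeFn_sum, Finset.sum_apply]
      rw [h1]
      apply Finset.sum_congr rfl
      intro j _
      have h2 : ((conj (v i j)) • e (j:ℕ) : lp (fun _ : ℕ => ℂ) p1) m
          = conj (v i j) * (e (j:ℕ) : ∀ _ : ℕ, ℂ) m := rfl
      rw [h2, he]
      simp only [single_coe]
      by_cases h : m = (j:ℕ)
      · rw [if_pos h, if_pos h, mul_one]
      · rw [if_neg h, if_neg h, mul_zero]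
    have hxlt : ∀ (m : ℕ) (hm : m < n), x m = conj (v i ⟨m, hm⟩) := by
      intro m hm
      rw [hxco]
      rw [Finset.sum_eq_single (⟨m, hm⟩ : Fin n)]
      · rw [if_pos rfl]
      · intro j _ hj
        rw [if_neg (fun h => hj (by exact Fin.ext h.symm))]
      · intro h
        exact absurd (Finset.mem_univ _) h
    have hxge : ∀ m : ℕ, n ≤ m → x m = 0 := by
      intro m hm
      rw [hxco]
      apply Finset.sum_eq_zero
      intro j _
      have hj := j.isLt
      rw [if_neg (fun h => by omega)]
    have hxnorm : ‖x‖ ≤ Real.sqrt S := by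
      have h1 := lemN2 hc1 x n hxge
      have h2 : ∑ m ∈ Finset.range n, ‖x m‖ ^ (2:ℝ) = S := by
        rw [hS, ← Fin.sum_univ_eq_sum_range (fun m => ‖x m‖ ^ (2:ℝ)) n]
        apply Finset.sum_congr rfl
        intro j _
        rw [hxlt (j:ℕ) j.isLt, Real.rpow_two, Fin.eta, RCLike.norm_conj]
      rwa [h2] at h1
    have hTx : (((D - A) x : lp (fun _ : ℕ => ℂ) p2)) (i:ℕ) = ((S : ℝ) : ℂ) := by
      have h1 : (D - A) x = ∑ j : Fin n, (conj (v i j)) • ((D - A) (e (j:ℕ))) := by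
        rw [hx, map_sum]
        apply Finset.sum_congr rfl
        intro j _
        rw [ContinuousLinearMap.map_smul]
      have h2 : (((D - A) x : lp (fun _ : ℕ => ℂ) p2)) (i:ℕ)
          = ∑ j : Fin n, conj (v i j) * v i j := by
        rw [h1, lp.coeFn_sum, Finset.sum_apply]
        rfl
      rw [h2]
      have h3 : ∀ j : Fin n, conj (v i j) * v i j = ((‖v i j‖ ^ 2 : ℝ) : ℂ) := by
        intro j
        rw [mul_comm, Complex.mul_conj, Complex.normSq_eq_norm_sq]
      rw [Finset.sum_congr rfl fun j _ => h3 j]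
      rw [hS]
      push_cast
      rfl
    have hSle : S ≤ ‖D - A‖ * Real.sqrt S := by
      have h1 : S = ‖(((D - A) x : lp (fun _ : ℕ => ℂ) p2)) (i:ℕ)‖ := by
        rw [hTx, Complex.norm_real, Real.norm_eq_abs, abs_of_nonneg hSnn]
      calc S = ‖(((D - A) x : lp (fun _ : ℕ => ℂ) p2)) (i:ℕ)‖ := h1
        _ ≤ ‖(D - A) x‖ := lp.norm_apply_le_norm hp20 _ _
        _ ≤ ‖D - A‖ * ‖x‖ := ContinuousLinearMap.le_opNorm _ _
        _ ≤ ‖D - A‖ * Real.sqrt S :=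
            mul_le_mul_of_nonneg_left hxnorm (norm_nonneg _)
    have hsqrtS : Real.sqrt S ≤ ‖D - A‖ := by
      rcases eq_or_lt_of_le (Real.sqrt_nonneg S) with h0 | hpos
      · rw [← h0]; exact norm_nonneg _
      · have h1 : Real.sqrt S * Real.sqrt S ≤ ‖D - A‖ * Real.sqrt S := by
          rw [Real.mul_self_sqrt hSnn]; exact hSle
        exact le_of_mul_le_mul_right h1 hpos
    exact sqrt_half_le hc (norm_nonneg _) hi hsqrtS


end S0

theorem statement0 (p1 p2 : ℝ≥0∞) [Fact (1 ≤ p1)] [Fact (1 ≤ p2)]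
    (hcase : (1 ≤ p1 ∧ p1 ≤ p2 ∧ p2 ≤ 2) ∨ (2 ≤ p1 ∧ p1 ≤ p2 ∧ p2 ≤ ∞))
    (hne : ¬(p1 = 1 ∧ p2 = ∞))
    (α β : ℝ) (hα : 0 < α) (hβ : 0 ≤ β)
    (D : lp (fun _ : ℕ => ℂ) p1 →L[ℂ] lp (fun _ : ℕ => ℂ) p2)
    (hD : ∀ (x : lp (fun _ : ℕ => ℂ) p1) (k : ℕ), D x k = (diagSeq α β (k + 1) : ℂ) * x k) :
    ∃ c1 c2 : ℝ, 0 < c1 ∧ 0 < c2 ∧ ∀ k : ℕ, 1 < k →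
      c1 * ((k : ℝ) ^ (-α) * Real.logb 2 k ^ β) ≤ approxNumber k D ∧
      approxNumber k D ≤ c2 * ((k : ℝ) ^ (-α) * Real.logb 2 k ^ β) := by
  obtain ⟨C2, hC2pos, hC2⟩ := S0.lemA hα hβ
  obtain ⟨cB, hcBpos, hcB⟩ := S0.lemB hα hβ
  have hpq : p1 ≤ p2 := by
    rcases hcase with ⟨_, h, _⟩ | ⟨_, h, _⟩ <;> exact h
  have hcase2 : p2 ≤ 2 ∨ 2 ≤ p1 := by
    rcases hcase with ⟨_, _, h⟩ | ⟨h, _, _⟩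
    · exact Or.inl h
    · exact Or.inr h
  have hs2 : (0:ℝ) < Real.sqrt 2 := Real.sqrt_pos.mpr (by norm_num)
  refine ⟨cB / Real.sqrt 2, C2, div_pos hcBpos hs2, hC2pos, ?_⟩
  intro k hk
  have hk2 : 2 ≤ k := hk
  have hk2R : (2:ℝ) ≤ (k:ℝ) := by exact_mod_cast hk2
  have hfk : 0 < S0.fff α β (k:ℝ) := S0.fff_pos hk2R
  have hfeq : S0.fff α β (k:ℝ) = (k : ℝ) ^ (-α) * Real.logb 2 k ^ β := rfl
  constructor
  · have hlow := S0.lower_bound hpq hcase2 D hD k hk2 (cB * S0.fff α β (k:ℝ))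
      (mul_nonneg hcBpos.le hfk.le)
      (fun m h1 h2 => hcB k m hk2 h1 h2)
    calc cB / Real.sqrt 2 * ((k : ℝ) ^ (-α) * Real.logb 2 k ^ β)
        = (cB * S0.fff α β (k:ℝ)) / Real.sqrt 2 := by rw [← hfeq]; ring
      _ ≤ approxNumber k D := hlow
  · have hup := S0.upper_bound hpq D hD k hk2 (C2 * S0.fff α β (k:ℝ))
      (mul_nonneg hC2pos.le hfk.le)
      (fun m hm => hC2 k m hk2 hm)
    calc approxNumber k D ≤ C2 * S0.fff α β (k:ℝ) := hup
      _ = C2 * ((k : ℝ) ^ (-α) * Real.logb 2 k ^ β) := by rw [hfeq]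
end

section
/- Let 1 ≤ p1, p2 ≤ ∞ and let σ = (σ_ℓ)_{ℓ≥1} be a nonincreasing sequence of positive reals such that the diagonal operator D_σ : ℓ_{p1} → ℓ_{p2}, (D_σ λ)_ℓ = σ_ℓ λ_ℓ, is bounded. Then for all N, k ∈ ℕ one has σ_{2N−1} · a_k(id : ℓ_{p1}^N → ℓ_{p2}^N) ≤ a_k(D_σ : ℓ_{p1} → ℓ_{p2}). -/
open scoped ENNReal NNReal

/-- The identity map `ℓ_p^N → ℓ_q^N` as a continuous linear map. -/
noncomputable def idCLM (p q : ℝ≥0∞) [Fact (1 ≤ p)] [Fact (1 ≤ q)] (N : ℕ) :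
    PiLp p (fun _ : Fin N => ℂ) →L[ℂ] PiLp q (fun _ : Fin N => ℂ) :=
  LinearMap.toContinuousLinearMap
    ((WithLp.linearEquiv q ℂ (∀ _ : Fin N, ℂ)).symm.toLinearMap ∘ₗ
      (WithLp.linearEquiv p ℂ (∀ _ : Fin N, ℂ)).toLinearMap)

section aux
set_option linter.unusedSectionVars false
variable (p : ℝ≥0∞) [hp1 : Fact (1 ≤ p)] (N : ℕ)

lemma memℓp_extF (x : PiLp p (fun _ : Fin N => ℂ)) :
    Memℓp (fun ℓ : ℕ => if h : ℓ < N then x ⟨ℓ, h⟩ else 0) p := by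
  refine (memℓp_zero ?_).of_exponent_ge (zero_le : (0:ℝ≥0∞) ≤ p)
  apply (Set.finite_Iio N).subset
  intro ℓ hℓ
  by_contra h
  simp only [Set.mem_Iio, not_lt] at h
  exact hℓ (dif_neg (by omega))

noncomputable def extLM : PiLp p (fun _ : Fin N => ℂ) →ₗ[ℂ] lp (fun _ : ℕ => ℂ) p where
  toFun x := ⟨fun ℓ => if h : ℓ < N then x ⟨ℓ, h⟩ else 0, memℓp_extF p N x⟩
  map_add' x y := by
    ext ℓ
    by_cases h : ℓ < N <;> simp [h, lp.coeFn_add, -AddSubgroup.coe_add, -AddMemClass.coe_add]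
  map_smul' c x := by
    ext ℓ
    by_cases h : ℓ < N <;> simp [h]

lemma extLM_apply (x : PiLp p (fun _ : Fin N => ℂ)) (ℓ : ℕ) :
    (extLM p N x : ℕ → ℂ) ℓ = if h : ℓ < N then x ⟨ℓ, h⟩ else 0 := rfl

lemma norm_extLM_le (x : PiLp p (fun _ : Fin N => ℂ)) : ‖extLM p N x‖ ≤ ‖x‖ := by
  rcases eq_or_ne p ∞ with rfl | hp
  · refine lp.norm_le_of_forall_le (norm_nonneg x) fun ℓ => ?_
    rw [extLM_apply]
    split_ifs with h
    · rw [PiLp.norm_eq_ciSup]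
      exact le_ciSup (f := fun i : Fin N => ‖x i‖)
        (Set.Finite.bddAbove (Set.finite_range _)) (⟨ℓ, h⟩ : Fin N)
    · simp
  · have hpt : 0 < p.toReal :=
      ENNReal.toReal_pos (by intro h0; exact absurd (h0 ▸ hp1.out) (by simp)) hp
    refine lp.norm_le_of_forall_sum_le hpt (norm_nonneg x) fun s => ?_
    have key : ∑ ℓ ∈ Finset.range N, ‖(extLM p N x : ℕ → ℂ) ℓ‖ ^ p.toReal
        = ‖x‖ ^ p.toReal := by
      rw [PiLp.norm_eq_sum hpt,
        ← Real.rpow_mul (Finset.sum_nonneg fun _ _ => Real.rpow_nonneg (norm_nonneg _) _),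
        one_div_mul_cancel hpt.ne', Real.rpow_one,
        ← Fin.sum_univ_eq_sum_range (fun ℓ => ‖(extLM p N x : ℕ → ℂ) ℓ‖ ^ p.toReal) N]
      refine Finset.sum_congr rfl fun i _ => ?_
      rw [extLM_apply, dif_pos i.isLt, Fin.eta]
    calc ∑ ℓ ∈ s, ‖(extLM p N x : ℕ → ℂ) ℓ‖ ^ p.toReal
        = ∑ ℓ ∈ s ∩ Finset.range N, ‖(extLM p N x : ℕ → ℂ) ℓ‖ ^ p.toReal := by
          refine (Finset.sum_subset Finset.inter_subset_left fun ℓ hℓ hℓ' => ?_).symm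
          have : ¬ ℓ < N := by
            intro hlt
            exact hℓ' (Finset.mem_inter.2 ⟨hℓ, Finset.mem_range.2 hlt⟩)
          rw [extLM_apply, dif_neg this]
          simp [Real.zero_rpow hpt.ne']
      _ ≤ ∑ ℓ ∈ Finset.range N, ‖(extLM p N x : ℕ → ℂ) ℓ‖ ^ p.toReal :=
          Finset.sum_le_sum_of_subset_of_nonneg Finset.inter_subset_right
            (fun _ _ _ => Real.rpow_nonneg (norm_nonneg _) _)
      _ = ‖x‖ ^ p.toReal := key

noncomputable def extCLM : PiLp p (fun _ : Fin N => ℂ) →L[ℂ] lp (fun _ : ℕ => ℂ) p :=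
  LinearMap.mkContinuous (extLM p N) 1 (fun x => by rw [one_mul]; exact norm_extLM_le p N x)

lemma norm_extCLM_le : ‖extCLM p N‖ ≤ 1 :=
  LinearMap.mkContinuous_norm_le _ zero_le_one _

variable (w : Fin N → ℂ)

noncomputable def wprojLM : lp (fun _ : ℕ => ℂ) p →ₗ[ℂ] PiLp p (fun _ : Fin N => ℂ) where
  toFun y := WithLp.toLp p (fun i => w i * y i)
  map_add' y z := by
    ext i
    simp [mul_add]
  map_smul' a y := by
    ext i
    simp [PiLp.smul_apply]
    ring

lemma wprojLM_apply (y : lp (fun _ : ℕ => ℂ) p) (i : Fin N) :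
    wprojLM p N w y i = w i * y i := rfl

lemma norm_wprojLM_le {C : ℝ} (hC : 0 ≤ C) (hc : ∀ i, ‖w i‖ ≤ C)
    (y : lp (fun _ : ℕ => ℂ) p) : ‖wprojLM p N w y‖ ≤ C * ‖y‖ := by
  have hCy : 0 ≤ C * ‖y‖ := mul_nonneg hC (norm_nonneg _)
  have hbd : ∀ i : Fin N, ‖w i * y (i : ℕ)‖ ≤ C * ‖y‖ := fun i => by
    rw [norm_mul]
    exact mul_le_mul (hc i)
      (lp.norm_apply_le_norm
        (by intro h; exact absurd (h ▸ hp1.out) (by simp)) y i)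
      (norm_nonneg _) hC
  rcases eq_or_ne p ∞ with rfl | hp
  · rw [PiLp.norm_eq_ciSup]
    exact Real.iSup_le (fun i => hbd i) hCy
  · have hpt : 0 < p.toReal :=
      ENNReal.toReal_pos (by intro h0; exact absurd (h0 ▸ hp1.out) (by simp)) hp
    rw [PiLp.norm_eq_sum hpt]
    have step : ∑ i : Fin N, ‖w i * y (i : ℕ)‖ ^ p.toReal ≤ (C * ‖y‖) ^ p.toReal := by
      calc ∑ i : Fin N, ‖w i * y (i : ℕ)‖ ^ p.toReal
          ≤ ∑ i : Fin N, C ^ p.toReal * ‖y (i : ℕ)‖ ^ p.toReal := by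
            refine Finset.sum_le_sum fun i _ => ?_
            rw [← Real.mul_rpow hC (norm_nonneg _)]
            exact Real.rpow_le_rpow (norm_nonneg _)
              (by rw [norm_mul]; exact mul_le_mul_of_nonneg_right (hc i) (norm_nonneg _))
              hpt.le
        _ = C ^ p.toReal * ∑ i : Fin N, ‖y (i : ℕ)‖ ^ p.toReal := by
            rw [Finset.mul_sum]
        _ ≤ C ^ p.toReal * ‖y‖ ^ p.toReal := by
            refine mul_le_mul_of_nonneg_left ?_ (Real.rpow_nonneg hC _)
            have := lp.sum_rpow_le_norm_rpow hpt y (Finset.range N)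
            rw [Fin.sum_univ_eq_sum_range (fun ℓ => ‖y ℓ‖ ^ p.toReal) N]
            exact this
        _ = (C * ‖y‖) ^ p.toReal := (Real.mul_rpow hC (norm_nonneg _)).symm
    calc (∑ i : Fin N, ‖w i * y (i : ℕ)‖ ^ p.toReal) ^ (1 / p.toReal)
        ≤ ((C * ‖y‖) ^ p.toReal) ^ (1 / p.toReal) :=
          Real.rpow_le_rpow (Finset.sum_nonneg fun _ _ => Real.rpow_nonneg (norm_nonneg _) _)
            step (by positivity)
      _ = C * ‖y‖ := by
          rw [← Real.rpow_mul hCy, mul_one_div, div_self hpt.ne', Real.rpow_one]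

noncomputable def wprojCLM {C : ℝ} (hC : 0 ≤ C) (hc : ∀ i, ‖w i‖ ≤ C) :
    lp (fun _ : ℕ => ℂ) p →L[ℂ] PiLp p (fun _ : Fin N => ℂ) :=
  LinearMap.mkContinuous (wprojLM p N w) C (norm_wprojLM_le p N w hC hc)

lemma norm_wprojCLM_le {C : ℝ} (hC : 0 ≤ C) (hc : ∀ i, ‖w i‖ ≤ C) :
    ‖wprojCLM p N w hC hc‖ ≤ C :=
  LinearMap.mkContinuous_norm_le _ hC _

end aux

theorem statement4 (p1 p2 : ℝ≥0∞) [Fact (1 ≤ p1)] [Fact (1 ≤ p2)]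
    (σ : ℕ → ℝ) (hσpos : ∀ ℓ, 1 ≤ ℓ → 0 < σ ℓ)
    (hσmono : ∀ j ℓ, 1 ≤ j → j ≤ ℓ → σ ℓ ≤ σ j)
    (D : lp (fun _ : ℕ => ℂ) p1 →L[ℂ] lp (fun _ : ℕ => ℂ) p2)
    (hD : ∀ (x : lp (fun _ : ℕ => ℂ) p1) (ℓ : ℕ), D x ℓ = (σ (ℓ + 1) : ℂ) * x ℓ) :
    ∀ N k : ℕ, 1 ≤ N → 1 ≤ k →
      σ (2 * N - 1) * approxNumber k (idCLM p1 p2 N) ≤ approxNumber k D := by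
  intro N k hN hk
  have hσN : 0 < σ N := hσpos N hN
  set C : ℝ := (σ N)⁻¹ with hCdef
  have hC : 0 ≤ C := (inv_pos.2 hσN).le
  set w : Fin N → ℂ := fun i => ((σ ((i : ℕ) + 1))⁻¹ : ℝ) with hwdef
  have hw : ∀ i : Fin N, ‖w i‖ ≤ C := by
    intro i
    have hpos : 0 < σ ((i : ℕ) + 1) := hσpos _ (by omega)
    have hle : σ N ≤ σ ((i : ℕ) + 1) := hσmono _ _ (by omega) (by omega)
    have : ‖w i‖ = (σ ((i : ℕ) + 1))⁻¹ := by
      rw [hwdef]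
      simp [Complex.norm_real, abs_of_pos (inv_pos.2 hpos)]
      exact hpos.le
    rw [this, hCdef]
    exact inv_anti₀ hσN hle
  set J := extCLM p1 N with hJdef
  set R := wprojCLM p2 N w hC hw with hRdef
  -- the factorization identity
  have hid : R ∘L (D ∘L J) = idCLM p1 p2 N := by
    refine ContinuousLinearMap.ext fun x => ?_
    ext i
    have hJx : (J x : ℕ → ℂ) (i : ℕ) = x i := by
      show (extLM p1 N x : ℕ → ℂ) (i : ℕ) = x i
      rw [extLM_apply, dif_pos i.isLt, Fin.eta]
    have hL : (R ∘L (D ∘L J)) x i = w i * (D (J x)) (i : ℕ) := rfl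
    have hRid : (idCLM p1 p2 N) x i = x i := rfl
    rw [hL, hRid, hD, hJx, hwdef]
    have : ((σ ((i : ℕ) + 1))⁻¹ : ℂ) * (σ ((i : ℕ) + 1) : ℂ) = 1 := by
      rw [inv_mul_cancel₀]
      exact_mod_cast (hσpos ((i : ℕ) + 1) (by omega)).ne'
    rw [← mul_assoc]
    push_cast
    rw [this, one_mul]
  have hbdd : BddBelow {c : ℝ | ∃ A : PiLp p1 (fun _ : Fin N => ℂ) →L[ℂ]
      PiLp p2 (fun _ : Fin N => ℂ),
      Module.rank ℂ (LinearMap.range (A : PiLp p1 (fun _ : Fin N => ℂ) →ₗ[ℂ]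
        PiLp p2 (fun _ : Fin N => ℂ))) < (k : Cardinal) ∧
        c = ‖idCLM p1 p2 N - A‖} := by
    refine ⟨0, ?_⟩
    rintro c ⟨A, -, rfl⟩
    exact norm_nonneg _
  have ha_nonneg : 0 ≤ approxNumber k (idCLM p1 p2 N) := by
    apply Real.sInf_nonneg
    rintro c ⟨A, -, rfl⟩
    exact norm_nonneg _
  have key : ∀ A : lp (fun _ : ℕ => ℂ) p1 →L[ℂ] lp (fun _ : ℕ => ℂ) p2,
      Module.rank ℂ (LinearMap.range (A : lp (fun _ : ℕ => ℂ) p1 →ₗ[ℂ]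
        lp (fun _ : ℕ => ℂ) p2)) < (k : Cardinal) →
      σ (2 * N - 1) * approxNumber k (idCLM p1 p2 N) ≤ ‖D - A‖ := by
    intro A hA
    set A' := R ∘L (A ∘L J) with hA'def
    have hrank : Module.rank ℂ (LinearMap.range (A' : PiLp p1 (fun _ : Fin N => ℂ) →ₗ[ℂ]
        PiLp p2 (fun _ : Fin N => ℂ))) < (k : Cardinal) := by
      have h1 : LinearMap.rank (A' : PiLp p1 (fun _ : Fin N => ℂ) →ₗ[ℂ]
          PiLp p2 (fun _ : Fin N => ℂ)) ≤ LinearMap.rank (A : lp (fun _ : ℕ => ℂ) p1 →ₗ[ℂ]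
          lp (fun _ : ℕ => ℂ) p2) := by
        rw [hA'def, ContinuousLinearMap.toLinearMap_comp, ContinuousLinearMap.toLinearMap_comp]
        exact (LinearMap.rank_comp_le_right _ _).trans (LinearMap.rank_comp_le_left _ _)
      exact lt_of_le_of_lt h1 hA
    have h2 : approxNumber k (idCLM p1 p2 N) ≤ ‖idCLM p1 p2 N - A'‖ :=
      csInf_le hbdd ⟨A', hrank, rfl⟩
    have h3 : idCLM p1 p2 N - A' = R ∘L ((D - A) ∘L J) := by
      rw [ContinuousLinearMap.sub_comp, ContinuousLinearMap.comp_sub, hid, hA'def]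
    have h4 : ‖R ∘L ((D - A) ∘L J)‖ ≤ C * ‖D - A‖ := by
      calc ‖R ∘L ((D - A) ∘L J)‖ ≤ ‖R‖ * ‖(D - A) ∘L J‖ :=
            ContinuousLinearMap.opNorm_comp_le _ _
        _ ≤ ‖R‖ * (‖D - A‖ * ‖J‖) :=
            mul_le_mul_of_nonneg_left (ContinuousLinearMap.opNorm_comp_le _ _) (norm_nonneg _)
        _ ≤ C * (‖D - A‖ * 1) := by
            refine mul_le_mul (norm_wprojCLM_le p2 N w hC hw)
              (mul_le_mul_of_nonneg_left (norm_extCLM_le p1 N) (norm_nonneg _))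
              (mul_nonneg (norm_nonneg _) (norm_nonneg _)) hC
        _ = C * ‖D - A‖ := by ring
    have h5 : approxNumber k (idCLM p1 p2 N) ≤ C * ‖D - A‖ := h2.trans (h3 ▸ h4)
    have h6 : σ N * approxNumber k (idCLM p1 p2 N) ≤ ‖D - A‖ := by
      calc σ N * approxNumber k (idCLM p1 p2 N) ≤ σ N * (C * ‖D - A‖) :=
            mul_le_mul_of_nonneg_left h5 hσN.le
        _ = ‖D - A‖ := by
            rw [hCdef, ← mul_assoc, mul_inv_cancel₀ hσN.ne', one_mul]
    have h7 : σ (2 * N - 1) ≤ σ N := hσmono N (2 * N - 1) hN (by omega)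
    calc σ (2 * N - 1) * approxNumber k (idCLM p1 p2 N)
        ≤ σ N * approxNumber k (idCLM p1 p2 N) :=
          mul_le_mul_of_nonneg_right h7 ha_nonneg
      _ ≤ ‖D - A‖ := h6
  show σ (2 * N - 1) * approxNumber k (idCLM p1 p2 N) ≤ sInf _
  refine le_csInf ⟨‖D - 0‖, 0, ?_, rfl⟩ ?_
  · rw [ContinuousLinearMap.coe_zero, LinearMap.range_zero, rank_bot]
    exact_mod_cast hk
  · rintro b ⟨A, hA, rfl⟩
    exact key A hA
end

section
/- Let 1 ≤ p1 ≤ p2 ≤ 2 or 2 ≤ p1 ≤ p2 ≤ ∞ and N ∈ ℕ. Then a_k(id : ℓ_{p1}^N → ℓ_{p2}^N) ≤ 1 for all k ≤ N and a_k(id : ℓ_{p1}^N → ℓ_{p2}^N) = 0 for k > N. Moreover, there is a constant c > 0, independent of N and k, such that a_k(id : ℓ_{p1}^N → ℓ_{p2}^N) ≥ c whenever k ≤ N/4. -/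
open scoped ENNReal NNReal ComplexInnerProductSpace

set_option maxHeartbeats 1000000

lemma sumRpowAnti (ι : Type*) [Fintype ι] (f : ι → ℝ≥0) {a b : ℝ} (ha : 0 < a) (hab : a ≤ b) :
    (∑ i, f i ^ b) ^ (1/b) ≤ (∑ i, f i ^ a) ^ (1/a) := by
  classical
  have hb : 0 < b := ha.trans_le hab
  by_cases hS : (∑ i, f i ^ a) = 0
  · have hf : ∀ i, f i = 0 := by
      intro i
      have := (Finset.sum_eq_zero_iff.mp hS) i (Finset.mem_univ i)
      simpa [NNReal.rpow_eq_zero_iff, ha.ne'] using this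
    have h1 : (∑ i, f i ^ b) = 0 := by
      simp [hf, NNReal.zero_rpow hb.ne']
    rw [h1, hS, NNReal.zero_rpow (by positivity), NNReal.zero_rpow (by positivity)]
  · set S : ℝ≥0 := (∑ i, f i ^ a) ^ (1/a) with hSdef
    have hSa : S ^ a = ∑ i, f i ^ a := by
      rw [hSdef, ← NNReal.rpow_mul, one_div, inv_mul_cancel₀ ha.ne', NNReal.rpow_one]
    have hfS : ∀ i, f i ≤ S := by
      intro i
      have h1 : f i ^ a ≤ S ^ a := by
        rw [hSa]
        exact Finset.single_le_sum (f := fun j => f j ^ a) (fun j _ => zero_le)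
          (Finset.mem_univ i)
      exact (NNReal.rpow_le_rpow_iff ha).mp h1
    have hSne : S ≠ 0 := by
      intro h
      rw [h, NNReal.zero_rpow ha.ne'] at hSa
      exact hS hSa.symm
    have key : ∑ i, f i ^ b ≤ S ^ b := by
      have : ∀ i, f i ^ b ≤ f i ^ a * S ^ (b - a) := by
        intro i
        by_cases hfi : f i = 0
        · simp [hfi, NNReal.zero_rpow hb.ne']
        · calc f i ^ b = f i ^ a * f i ^ (b - a) := by
                rw [← NNReal.rpow_add hfi]; ring_nf
            _ ≤ f i ^ a * S ^ (b - a) :=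
                mul_le_mul_right (NNReal.rpow_le_rpow (hfS i) (by linarith)) _
      calc ∑ i, f i ^ b ≤ ∑ i, f i ^ a * S ^ (b - a) := Finset.sum_le_sum fun i _ => this i
        _ = S ^ a * S ^ (b - a) := by rw [← Finset.sum_mul, hSa]
        _ = S ^ b := by rw [← NNReal.rpow_add hSne]; ring_nf
    calc (∑ i, f i ^ b) ^ (1/b) ≤ (S ^ b) ^ (1/b) := NNReal.rpow_le_rpow key (by positivity)
      _ = S := by rw [← NNReal.rpow_mul, mul_one_div, div_self hb.ne', NNReal.rpow_one]

lemma coordLe {N : ℕ} (p : ℝ≥0∞) [Fact (1 ≤ p)] (x : ∀ _ : Fin N, ℂ) (i : Fin N) :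
    ‖x i‖₊ ≤ ‖(WithLp.equiv p (∀ _ : Fin N, ℂ)).symm x‖₊ := by
  have hp0 : p ≠ 0 := (lt_of_lt_of_le zero_lt_one (Fact.out (p := 1 ≤ p))).ne'
  by_cases hp : p = ∞
  · subst hp
    rw [WithLp.equiv_symm_apply, PiLp.nnnorm_toLp]
    exact nnnorm_le_pi_nnnorm x i
  · have hpt : 0 < p.toReal := ENNReal.toReal_pos hp0 hp
    rw [PiLp.nnnorm_eq_sum hp]
    have h1 : ‖x i‖₊ ^ p.toReal ≤ ∑ j, ‖(WithLp.equiv p (∀ _ : Fin N, ℂ)).symm x j‖₊ ^ p.toReal := by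
      refine Finset.single_le_sum (f := fun j => ‖(WithLp.equiv p (∀ _ : Fin N, ℂ)).symm x j‖₊ ^ p.toReal)
        (fun j _ => zero_le) (Finset.mem_univ i) |>.trans_eq' ?_
      rw [WithLp.equiv_symm_apply, PiLp.toLp_apply]
    calc ‖x i‖₊ = (‖x i‖₊ ^ p.toReal) ^ (1 / p.toReal) := by
          rw [← NNReal.rpow_mul, mul_one_div, div_self hpt.ne', NNReal.rpow_one]
      _ ≤ _ := NNReal.rpow_le_rpow h1 (by positivity)


lemma normAnti {N : ℕ} (p q : ℝ≥0∞) [Fact (1 ≤ p)] [Fact (1 ≤ q)] (h : p ≤ q)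
    (x : ∀ _ : Fin N, ℂ) :
    ‖(WithLp.equiv q (∀ _ : Fin N, ℂ)).symm x‖ ≤ ‖(WithLp.equiv p (∀ _ : Fin N, ℂ)).symm x‖ := by
  rw [← coe_nnnorm, ← coe_nnnorm, NNReal.coe_le_coe]
  have hp0 : p ≠ 0 := (lt_of_lt_of_le zero_lt_one (Fact.out (p := 1 ≤ p))).ne'
  by_cases hq : q = ∞
  · subst hq
    rw [WithLp.equiv_symm_apply, PiLp.nnnorm_toLp]
    refine pi_nnnorm_le_iff.mpr fun i => coordLe p x i
  · have hp : p ≠ ∞ := fun hp => hq (top_le_iff.mp (hp ▸ h))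
    rw [PiLp.nnnorm_eq_sum hq, PiLp.nnnorm_eq_sum hp]
    simp only [WithLp.equiv_symm_apply, PiLp.toLp_apply]
    exact sumRpowAnti _ _ (ENNReal.toReal_pos hp0 hp) (ENNReal.toReal_mono hq h)

lemma hsBound {N : ℕ} (B : EuclideanSpace ℂ (Fin N) →L[ℂ] EuclideanSpace ℂ (Fin N))
    (K : Submodule ℂ (EuclideanSpace ℂ (Fin N))) (hB : ∀ x ∈ K, B x = x) :
    (Module.finrank ℂ K : ℝ) ≤
      ∑ j : Fin N, ‖(ContinuousLinearMap.adjoint B) (EuclideanSpace.single j 1)‖ ^ 2 := by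
  classical
  set d := Module.finrank ℂ K with hd
  let w : OrthonormalBasis (Fin d) ℂ K := stdOrthonormalBasis ℂ K
  have hw : Orthonormal ℂ (fun l : Fin d => ((w l : EuclideanSpace ℂ (Fin N)) : EuclideanSpace ℂ (Fin N))) :=
    w.orthonormal.comp_linearIsometry K.subtypeₗᵢ
  have hnorm1 : ∀ l : Fin d, ‖(w l : EuclideanSpace ℂ (Fin N))‖ = 1 := fun l => hw.1 l
  have inner_eq : ∀ (l : Fin d) (j : Fin N),
      ⟪(w l : EuclideanSpace ℂ (Fin N)), (ContinuousLinearMap.adjoint B) (EuclideanSpace.single j 1)⟫ =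
        ⟪(w l : EuclideanSpace ℂ (Fin N)), EuclideanSpace.single j (1:ℂ)⟫ := by
    intro l j
    rw [ContinuousLinearMap.adjoint_inner_right, hB _ (w l).2]
  have step1 : ∀ l : Fin d, ∑ j : Fin N,
      ‖⟪(w l : EuclideanSpace ℂ (Fin N)), (ContinuousLinearMap.adjoint B) (EuclideanSpace.single j 1)⟫‖ ^ 2 = 1 := by
    intro l
    simp only [inner_eq]
    have : ∀ j : Fin N, ‖⟪(w l : EuclideanSpace ℂ (Fin N)), EuclideanSpace.single j (1:ℂ)⟫‖ = ‖(w l : EuclideanSpace ℂ (Fin N)) j‖ := by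
      intro j
      rw [EuclideanSpace.inner_single_right]
      simp [RCLike.norm_conj]
    simp only [this]
    have := PiLp.norm_sq_eq_of_L2 (fun _ : Fin N => ℂ) (w l : EuclideanSpace ℂ (Fin N))
    rw [← this, hnorm1 l, one_pow]
  calc (d : ℝ) = ∑ l : Fin d, ∑ j : Fin N,
        ‖⟪(w l : EuclideanSpace ℂ (Fin N)), (ContinuousLinearMap.adjoint B) (EuclideanSpace.single j 1)⟫‖ ^ 2 := by
        rw [Finset.sum_congr rfl fun l _ => step1 l, Finset.sum_const, Finset.card_univ,
          Fintype.card_fin, nsmul_eq_mul, mul_one]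
    _ = ∑ j : Fin N, ∑ l : Fin d,
        ‖⟪(w l : EuclideanSpace ℂ (Fin N)), (ContinuousLinearMap.adjoint B) (EuclideanSpace.single j 1)⟫‖ ^ 2 :=
        Finset.sum_comm
    _ ≤ ∑ j : Fin N, ‖(ContinuousLinearMap.adjoint B) (EuclideanSpace.single j 1)‖ ^ 2 :=
        Finset.sum_le_sum fun j _ => hw.sum_inner_products_le _

lemma existsBig {N : ℕ} (hN : 0 < N) (g : Fin N → ℝ)
    (hm : (3/4 : ℝ) * N ≤ ∑ j, g j) : ∃ j, (3/4 : ℝ) ≤ g j := by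
  haveI : Nonempty (Fin N) := Fin.pos_iff_nonempty.mp hN
  by_contra hcon
  push_neg at hcon
  have h2 := Finset.sum_lt_sum_of_nonempty Finset.univ_nonempty (fun j _ => hcon j)
  rw [Finset.sum_const, Finset.card_univ, Fintype.card_fin, nsmul_eq_mul] at h2
  linarith

lemma keyLower (p1 p2 : ℝ≥0∞) [Fact (1 ≤ p1)] [Fact (1 ≤ p2)]
    (hcase : p2 ≤ 2 ∨ 2 ≤ p1) (N k : ℕ) (hk : 1 ≤ k) (hkN : 4 * k ≤ N)
    (A : PiLp p1 (fun _ : Fin N => ℂ) →L[ℂ] PiLp p2 (fun _ : Fin N => ℂ))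
    (hA : Module.rank ℂ (LinearMap.range (A : PiLp p1 (fun _ : Fin N => ℂ) →ₗ[ℂ]
      PiLp p2 (fun _ : Fin N => ℂ))) < (k : Cardinal)) :
    (1:ℝ)/2 ≤ ‖idCLM p1 p2 N - A‖ := by
  have hN : 0 < N := lt_of_lt_of_le (by omega) hkN
  let E := EuclideanSpace ℂ (Fin N)
  let eP : PiLp p1 (fun _ : Fin N => ℂ) ≃ₗ[ℂ] E :=
    (WithLp.linearEquiv p1 ℂ (∀ _ : Fin N, ℂ)).trans (WithLp.linearEquiv 2 ℂ (∀ _ : Fin N, ℂ)).symm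
  let eQ : PiLp p2 (fun _ : Fin N => ℂ) ≃ₗ[ℂ] E :=
    (WithLp.linearEquiv p2 ℂ (∀ _ : Fin N, ℂ)).trans (WithLp.linearEquiv 2 ℂ (∀ _ : Fin N, ℂ)).symm
  let A₂ : E →L[ℂ] E := LinearMap.toContinuousLinearMap
    (eQ.toLinearMap ∘ₗ (A : PiLp p1 (fun _ : Fin N => ℂ) →ₗ[ℂ] PiLp p2 (fun _ : Fin N => ℂ)) ∘ₗ
      eP.symm.toLinearMap)
  haveI : FiniteDimensional ℂ (PiLp p2 (fun _ : Fin N => ℂ)) := Module.Finite.equiv eQ.symm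
  have h1 : (A₂ : E →ₗ[ℂ] E) = eQ.toLinearMap ∘ₗ
      ((A : PiLp p1 (fun _ : Fin N => ℂ) →ₗ[ℂ] PiLp p2 (fun _ : Fin N => ℂ)) ∘ₗ
        eP.symm.toLinearMap) :=
    LinearMap.coe_toContinuousLinearMap _
  have hsub : LinearMap.range (A₂ : E →ₗ[ℂ] E) ≤
      (LinearMap.range (A : PiLp p1 (fun _ : Fin N => ℂ) →ₗ[ℂ]
        PiLp p2 (fun _ : Fin N => ℂ))).map eQ.toLinearMap := by
    rintro y ⟨x, rfl⟩
    exact ⟨A (eP.symm x), ⟨_, rfl⟩, by rw [h1]; rfl⟩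
  have hfA : Module.finrank ℂ (LinearMap.range (A : PiLp p1 (fun _ : Fin N => ℂ) →ₗ[ℂ]
      PiLp p2 (fun _ : Fin N => ℂ))) < k := by
    have h2 := Module.finrank_eq_rank ℂ (LinearMap.range (A : PiLp p1 (fun _ : Fin N => ℂ) →ₗ[ℂ]
      PiLp p2 (fun _ : Fin N => ℂ)))
    rw [← h2] at hA
    exact_mod_cast hA
  set r := Module.finrank ℂ (LinearMap.range (A₂ : E →ₗ[ℂ] E)) with hr
  have hrk : r < k := by
    calc r ≤ Module.finrank ℂ ((LinearMap.range (A : PiLp p1 (fun _ : Fin N => ℂ) →ₗ[ℂ]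
          PiLp p2 (fun _ : Fin N => ℂ))).map eQ.toLinearMap) :=
        Submodule.finrank_mono hsub
      _ = Module.finrank ℂ (LinearMap.range (A : PiLp p1 (fun _ : Fin N => ℂ) →ₗ[ℂ]
          PiLp p2 (fun _ : Fin N => ℂ))) := LinearEquiv.finrank_map_eq _ _
      _ < k := hfA
  have hNk : (3/4 : ℝ) * N ≤ (N : ℝ) - r := by
    have h4 : (4:ℝ) * k ≤ N := by exact_mod_cast hkN
    have h5 : (r:ℝ) + 1 ≤ k := by exact_mod_cast hrk
    linarith
  rcases hcase with hp2 | hp1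
  · -- case p2 ≤ 2 : column bound
    set B : E →L[ℂ] E := 1 - ContinuousLinearMap.adjoint A₂ with hB
    have hBK : ∀ x ∈ (LinearMap.range (A₂ : E →ₗ[ℂ] E))ᗮ, B x = x := by
      intro x hx
      have hz : ContinuousLinearMap.adjoint A₂ x = 0 := by
        rw [← inner_self_eq_zero (𝕜 := ℂ), ContinuousLinearMap.adjoint_inner_left]
        exact (Submodule.mem_orthogonal' _ _).mp hx _ (LinearMap.mem_range_self _ _)
      simp [hB, ContinuousLinearMap.sub_apply, hz]
    have hs := hsBound B _ hBK
    have hadj : ContinuousLinearMap.adjoint B = 1 - A₂ := by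
      rw [hB, map_sub, ContinuousLinearMap.adjoint_adjoint]
      congr 1
      rw [ContinuousLinearMap.one_def, ContinuousLinearMap.adjoint_id]
    rw [hadj] at hs
    have hfr : (Module.finrank ℂ ((LinearMap.range (A₂ : E →ₗ[ℂ] E))ᗮ) : ℝ) = (N:ℝ) - r := by
      have h3 := Submodule.finrank_add_finrank_orthogonal
        (K := LinearMap.range (A₂ : E →ₗ[ℂ] E))
      rw [finrank_euclideanSpace_fin] at h3
      have := congrArg (Nat.cast : ℕ → ℝ) h3
      push_cast at this
      linarith
    obtain ⟨j, hj⟩ := existsBig hN _ (le_trans (by rw [hfr]; linarith) hs)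
    set u := (WithLp.equiv p1 (∀ _ : Fin N, ℂ)).symm (Pi.single j 1) with hu
    have hnu : ‖u‖ = 1 := by
      rw [hu, WithLp.equiv_symm_apply, PiLp.norm_toLp_single, norm_one]
    have happ : WithLp.equiv p2 (∀ _ : Fin N, ℂ) ((idCLM p1 p2 N - A) u) =
        WithLp.equiv 2 (∀ _ : Fin N, ℂ) ((1 - A₂) (EuclideanSpace.single j 1)) := rfl
    have hle : ‖(1 - A₂) (EuclideanSpace.single j 1)‖ ≤ ‖(idCLM p1 p2 N - A) u‖ := by
      have h6 := normAnti p2 2 hp2 (WithLp.equiv p2 (∀ _ : Fin N, ℂ) ((idCLM p1 p2 N - A) u))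
      nth_rewrite 1 [happ] at h6
      simpa only [Equiv.symm_apply_apply] using h6
    have hop := (idCLM p1 p2 N - A).le_opNorm u
    rw [hnu, mul_one] at hop
    have h14 : (1:ℝ)/2 ≤ ‖(1 - A₂) (EuclideanSpace.single j 1)‖ := by
      nlinarith [norm_nonneg ((1 - A₂) (EuclideanSpace.single j 1))]
    linarith
  · -- case 2 ≤ p1 : row bound
    set B : E →L[ℂ] E := 1 - A₂ with hB
    have hBK : ∀ x ∈ LinearMap.ker (A₂ : E →ₗ[ℂ] E), B x = x := by
      intro x hx
      have hz : A₂ x = 0 := hx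
      simp [hB, ContinuousLinearMap.sub_apply, hz]
    have hs := hsBound B _ hBK
    have hfr : (Module.finrank ℂ (LinearMap.ker (A₂ : E →ₗ[ℂ] E)) : ℝ) = (N:ℝ) - r := by
      have h3 := LinearMap.finrank_range_add_finrank_ker (A₂ : E →ₗ[ℂ] E)
      rw [finrank_euclideanSpace_fin] at h3
      have := congrArg (Nat.cast : ℕ → ℝ) h3
      push_cast at this
      linarith
    obtain ⟨j, hj⟩ := existsBig hN _ (le_trans (by rw [hfr]; linarith) hs)
    set x : E := (ContinuousLinearMap.adjoint B) (EuclideanSpace.single j 1) with hx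
    have hxpos : (0:ℝ) < ‖x‖ := by nlinarith [norm_nonneg x]
    set u := (WithLp.equiv p1 (∀ _ : Fin N, ℂ)).symm (WithLp.equiv 2 (∀ _ : Fin N, ℂ) x) with hu
    have hnu : ‖u‖ ≤ ‖x‖ := by
      have h6 := normAnti 2 p1 hp1 (WithLp.equiv 2 (∀ _ : Fin N, ℂ) x)
      simpa only [Equiv.symm_apply_apply] using h6
    have happ : WithLp.equiv p2 (∀ _ : Fin N, ℂ) ((idCLM p1 p2 N - A) u) =
        WithLp.equiv 2 (∀ _ : Fin N, ℂ) (B x) := rfl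
    -- the j-th coordinate of B x equals ‖x‖²
    have hcoord : (WithLp.equiv 2 (∀ _ : Fin N, ℂ) (B x)) j = (‖x‖ : ℂ)^2 := by
      have h7 : (WithLp.equiv 2 (∀ _ : Fin N, ℂ) (B x)) j =
          ⟪EuclideanSpace.single j (1:ℂ), B x⟫ := by
        rw [EuclideanSpace.inner_single_left, map_one, one_mul]
        rfl
      rw [h7, ← ContinuousLinearMap.adjoint_inner_left, ← hx, inner_self_eq_norm_sq_to_K]
      norm_cast
    have hle : ‖x‖^2 ≤ ‖(idCLM p1 p2 N - A) u‖ := by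
      have h8 := coordLe p2 (WithLp.equiv p2 (∀ _ : Fin N, ℂ) ((idCLM p1 p2 N - A) u)) j
      rw [Equiv.symm_apply_apply] at h8
      have h9 : ‖(WithLp.equiv p2 (∀ _ : Fin N, ℂ) ((idCLM p1 p2 N - A) u)) j‖ ≤
          ‖(idCLM p1 p2 N - A) u‖ := h8
      rw [happ, hcoord] at h9
      calc ‖x‖^2 = ‖(‖x‖ : ℂ)^2‖ := by
            rw [norm_pow, Complex.norm_real, Real.norm_eq_abs, abs_of_nonneg (norm_nonneg x)]
        _ ≤ _ := h9
    have hop := (idCLM p1 p2 N - A).le_opNorm u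
    have h14 : (1:ℝ)/2 ≤ ‖x‖ := by nlinarith [norm_nonneg x]
    have h15 : ‖x‖ ≤ ‖idCLM p1 p2 N - A‖ := by
      have h16 : ‖x‖ * ‖x‖ ≤ ‖idCLM p1 p2 N - A‖ * ‖x‖ := by
        calc ‖x‖ * ‖x‖ = ‖x‖^2 := (sq ‖x‖).symm
          _ ≤ ‖(idCLM p1 p2 N - A) u‖ := hle
          _ ≤ ‖idCLM p1 p2 N - A‖ * ‖u‖ := hop
          _ ≤ ‖idCLM p1 p2 N - A‖ * ‖x‖ := by
              exact mul_le_mul_of_nonneg_left hnu (norm_nonneg _)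
      exact le_of_mul_le_mul_right h16 hxpos
    linarith



theorem statement5 (p1 p2 : ℝ≥0∞) [Fact (1 ≤ p1)] [Fact (1 ≤ p2)]
    (hcase : (1 ≤ p1 ∧ p1 ≤ p2 ∧ p2 ≤ 2) ∨ (2 ≤ p1 ∧ p1 ≤ p2 ∧ p2 ≤ ∞)) :
    (∀ N k : ℕ, 1 ≤ k → k ≤ N → approxNumber k (idCLM p1 p2 N) ≤ 1) ∧
    (∀ N k : ℕ, N < k → approxNumber k (idCLM p1 p2 N) = 0) ∧
    (∃ c : ℝ, 0 < c ∧ ∀ N k : ℕ, 1 ≤ k → 4 * k ≤ N → c ≤ approxNumber k (idCLM p1 p2 N)) := by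
  have hp12 : p1 ≤ p2 := by rcases hcase with ⟨_, h, _⟩ | ⟨_, h, _⟩ <;> exact h
  have hbdd : ∀ N k : ℕ, BddBelow {c : ℝ | ∃ A : PiLp p1 (fun _ : Fin N => ℂ) →L[ℂ]
      PiLp p2 (fun _ : Fin N => ℂ),
      Module.rank ℂ (LinearMap.range (A : PiLp p1 (fun _ : Fin N => ℂ) →ₗ[ℂ] PiLp p2 (fun _ : Fin N => ℂ))) < (k : Cardinal) ∧
        c = ‖idCLM p1 p2 N - A‖} := by
    intro N k
    exact ⟨0, by rintro c ⟨A, -, rfl⟩; exact norm_nonneg _⟩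
  have hmem0 : ∀ N k : ℕ, 1 ≤ k → ‖idCLM p1 p2 N - 0‖ ∈ {c : ℝ |
      ∃ A : PiLp p1 (fun _ : Fin N => ℂ) →L[ℂ] PiLp p2 (fun _ : Fin N => ℂ),
      Module.rank ℂ (LinearMap.range (A : PiLp p1 (fun _ : Fin N => ℂ) →ₗ[ℂ] PiLp p2 (fun _ : Fin N => ℂ))) < (k : Cardinal) ∧
        c = ‖idCLM p1 p2 N - A‖} := by
    intro N k hk
    refine ⟨0, ?_, rfl⟩
    rw [ContinuousLinearMap.coe_zero, LinearMap.range_zero, rank_bot]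
    exact_mod_cast Nat.pos_of_ne_zero (by omega)
  have hnorm_le : ∀ N : ℕ, ‖idCLM p1 p2 N‖ ≤ 1 := by
    intro N
    refine ContinuousLinearMap.opNorm_le_bound _ zero_le_one fun u => ?_
    rw [one_mul]
    have h6 := normAnti p1 p2 hp12 (WithLp.equiv p1 (∀ _ : Fin N, ℂ) u)
    rw [Equiv.symm_apply_apply] at h6
    exact h6
  refine ⟨?_, ?_, ?_⟩
  · -- part 1
    intro N k hk hkN
    have h := csInf_le (hbdd N k) (hmem0 N k hk)
    rw [sub_zero] at h
    exact h.trans (hnorm_le N)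
  · -- part 2
    intro N k hNk
    have hmemT : (0:ℝ) ∈ {c : ℝ | ∃ A : PiLp p1 (fun _ : Fin N => ℂ) →L[ℂ]
        PiLp p2 (fun _ : Fin N => ℂ),
        Module.rank ℂ (LinearMap.range (A : PiLp p1 (fun _ : Fin N => ℂ) →ₗ[ℂ] PiLp p2 (fun _ : Fin N => ℂ))) < (k : Cardinal) ∧
          c = ‖idCLM p1 p2 N - A‖} := by
      refine ⟨idCLM p1 p2 N, ?_, by rw [sub_self, norm_zero]⟩
      have hd : Module.rank ℂ (PiLp p1 (fun _ : Fin N => ℂ)) = N := by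
        rw [(WithLp.linearEquiv p1 ℂ (∀ _ : Fin N, ℂ)).rank_eq, rank_fun', Fintype.card_fin]
      calc Module.rank ℂ (LinearMap.range ((idCLM p1 p2 N : PiLp p1 (fun _ : Fin N => ℂ) →ₗ[ℂ] PiLp p2 (fun _ : Fin N => ℂ))))
          ≤ Module.rank ℂ (PiLp p1 (fun _ : Fin N => ℂ)) := LinearMap.rank_le_domain _
        _ = (N : Cardinal) := hd
        _ < (k : Cardinal) := by exact_mod_cast hNk
    refine le_antisymm (csInf_le (hbdd N k) hmemT) ?_
    exact le_csInf ⟨0, hmemT⟩ (by rintro c ⟨A, -, rfl⟩; exact norm_nonneg _)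
  · -- part 3
    refine ⟨1/2, by norm_num, fun N k hk hkN => ?_⟩
    refine le_csInf ⟨_, hmem0 N k hk⟩ ?_
    rintro c ⟨A, hA, rfl⟩
    refine keyLower p1 p2 ?_ N k hk hkN A hA
    rcases hcase with ⟨-, -, h⟩ | ⟨h, -, -⟩
    · exact Or.inl h
    · exact Or.inr h
end

section
/- Let 1 ≤ p2 < p1 ≤ ∞ and N ∈ ℕ. Then for every k = 1, …, N one has the exact formula a_k(id : ℓ_{p1}^N → ℓ_{p2}^N) = (N − k + 1)^{1/p2 − 1/p1}. -/
open scoped ENNReal NNReal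

lemma exists_flat_vector {N m : ℕ} (hm : 1 ≤ m) (E : Submodule ℂ (Fin N → ℂ))
    (hE : m ≤ Module.finrank ℂ E) :
    ∃ x, x ∈ E ∧ (∀ i, ‖x i‖ ≤ 1) ∧
      m ≤ (Finset.univ.filter fun i => ‖x i‖ = 1).card := by
  classical
  set S : (Fin N → ℂ) → Finset (Fin N) :=
    fun x => Finset.univ.filter fun i => ‖x i‖ = 1 with hS
  set C : Set ℕ := {c | ∃ x, (x ∈ E ∧ ∀ i, ‖x i‖ ≤ 1) ∧ c = (S x).card} with hC
  -- C is nonempty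
  have hEbot : E ≠ ⊥ := by
    intro h
    rw [h, finrank_bot] at hE; omega
  obtain ⟨x0, hx0E, hx0⟩ := Submodule.exists_mem_ne_zero_of_ne_bot hEbot
  obtain ⟨j0, hj0⟩ : ∃ j, x0 j ≠ 0 := by
    by_contra h; push_neg at h; exact hx0 (funext h)
  obtain ⟨j, -, hj⟩ := Finset.exists_max_image Finset.univ (fun i => ‖x0 i‖) ⟨j0, Finset.mem_univ j0⟩
  have hxj : (0:ℝ) < ‖x0 j‖ := lt_of_lt_of_le (norm_pos_iff.mpr hj0) (hj j0 (Finset.mem_univ _))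
  have hCne : C.Nonempty := by
    refine ⟨(S ((‖x0 j‖:ℂ)⁻¹ • x0)).card, (‖x0 j‖:ℂ)⁻¹ • x0, ⟨E.smul_mem _ hx0E, ?_⟩, rfl⟩
    intro i
    simp only [Pi.smul_apply, smul_eq_mul, norm_mul, norm_inv, Complex.norm_real,
      Real.norm_eq_abs, abs_of_pos hxj]
    rw [inv_mul_le_iff₀ hxj, mul_one]
    exact hj i (Finset.mem_univ _)
  have hCbdd : BddAbove C := by
    refine ⟨N, fun c hc => ?_⟩
    obtain ⟨x, -, rfl⟩ := hc
    exact le_trans (Finset.card_filter_le _ _) (by simp)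
  have hc_mem : sSup C ∈ C := Nat.sSup_mem hCne hCbdd
  obtain ⟨x, ⟨hxE, hxle⟩, hxc⟩ := hc_mem
  refine ⟨x, hxE, hxle, ?_⟩
  by_contra hlt
  push_neg at hlt
  -- find y ∈ E, y ≠ 0, vanishing on S x
  have hker : ∃ y, y ∈ E ∧ y ≠ 0 ∧ ∀ i ∈ S x, y i = 0 := by
    set R : E →ₗ[ℂ] (↥(S x) → ℂ) :=
      LinearMap.pi (fun i : ↥(S x) => (LinearMap.proj (i : Fin N)).comp E.subtype) with hR
    have hrange : Module.finrank ℂ (LinearMap.range R) ≤ (S x).card := by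
      have := (LinearMap.range R).finrank_le
      rwa [Module.finrank_fintype_fun_eq_card, Fintype.card_coe] at this
    have hkerpos : 0 < Module.finrank ℂ (LinearMap.ker R) := by
      have hrn := LinearMap.finrank_range_add_finrank_ker R
      have h1 : m ≤ Module.finrank ℂ E := hE
      have h2 : (S x).card < m := hlt
      omega
    obtain ⟨y', hy'mem, hy'⟩ := Submodule.exists_mem_ne_zero_of_ne_bot
      (by intro h; rw [h, finrank_bot] at hkerpos; omega : LinearMap.ker R ≠ ⊥)
    refine ⟨(y' : Fin N → ℂ), y'.2, ?_, ?_⟩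
    · intro h
      apply hy'
      exact Subtype.ext h
    · intro i hi
      have := LinearMap.mem_ker.mp hy'mem
      have := congrFun this ⟨i, hi⟩
      simpa [hR] using this
  obtain ⟨y, hyE, hy0, hyS⟩ := hker
  obtain ⟨jy, hjy⟩ : ∃ j, y j ≠ 0 := by
    by_contra h; push_neg at h; exact hy0 (funext h)
  set T : Set ℝ := {t | 0 ≤ t ∧ ∀ i, ‖x i + (t:ℂ) * y i‖ ≤ 1} with hT
  have hTne : T.Nonempty := ⟨0, le_refl _, by simpa using hxle⟩
  have hTbdd : BddAbove T := by
    refine ⟨2 / ‖y jy‖, fun t ht => ?_⟩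
    obtain ⟨ht0, htle⟩ := ht
    have h1 : ‖(t:ℂ) * y jy‖ ≤ 2 := by
      calc ‖(t:ℂ) * y jy‖ = ‖(x jy + (t:ℂ) * y jy) - x jy‖ := by ring_nf
        _ ≤ ‖x jy + (t:ℂ) * y jy‖ + ‖x jy‖ := norm_sub_le _ _
        _ ≤ 1 + 1 := add_le_add (htle jy) (hxle jy)
        _ = 2 := by norm_num
    rw [norm_mul, Complex.norm_real, Real.norm_eq_abs, abs_of_nonneg ht0] at h1
    rw [le_div_iff₀ (norm_pos_iff.mpr hjy)]
    exact h1
  have hTclosed : IsClosed T := by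
    have : T = {t : ℝ | 0 ≤ t} ∩ ⋂ i, {t : ℝ | ‖x i + (t:ℂ) * y i‖ ≤ 1} := by
      ext t; simp [hT, Set.mem_iInter]
    rw [this]
    exact (isClosed_le continuous_const continuous_id).inter
      (isClosed_iInter fun i => isClosed_le (by fun_prop) continuous_const)
  set t0 : ℝ := sSup T with ht0def
  have ht0T : t0 ∈ T := hTclosed.csSup_mem hTne hTbdd
  -- there is a new coordinate of modulus one
  have hnew : ∃ i, y i ≠ 0 ∧ ‖x i + (t0:ℂ) * y i‖ = 1 := by
    by_contra h
    push_neg at h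
    set u : Finset (Fin N) := Finset.univ.filter fun i => y i ≠ 0 with hu
    have hune : u.Nonempty := ⟨jy, by simp [hu, hjy]⟩
    set ε : ℝ := u.inf' hune fun i => (1 - ‖x i + (t0:ℂ) * y i‖) / ‖y i‖ with hε
    have hεpos : 0 < ε := by
      rw [hε, Finset.lt_inf'_iff]
      intro i hi
      have hyi : y i ≠ 0 := by simpa [hu] using hi
      have hlt1 : ‖x i + (t0:ℂ) * y i‖ < 1 :=
        lt_of_le_of_ne (ht0T.2 i) (h i hyi)
      exact div_pos (by linarith) (norm_pos_iff.mpr hyi)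
    have hmem : t0 + ε ∈ T := by
      constructor
      · linarith [ht0T.1]
      · intro i
        by_cases hyi : y i = 0
        · simpa [hyi] using ht0T.2 i
        · have hεle : ε ≤ (1 - ‖x i + (t0:ℂ) * y i‖) / ‖y i‖ :=
            Finset.inf'_le _ (by simp [hu, hyi])
          have : ((t0 + ε : ℝ):ℂ) * y i = (t0:ℂ) * y i + (ε:ℂ) * y i := by
            push_cast; ring
          rw [this, ← add_assoc]
          have hnorme : ‖(ε:ℂ) * y i‖ = ε * ‖y i‖ := by
            rw [norm_mul, Complex.norm_real, Real.norm_eq_abs, abs_of_pos hεpos]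
          calc ‖x i + (t0:ℂ) * y i + (ε:ℂ) * y i‖
              ≤ ‖x i + (t0:ℂ) * y i‖ + ‖(ε:ℂ) * y i‖ := norm_add_le _ _
            _ ≤ ‖x i + (t0:ℂ) * y i‖ + ((1 - ‖x i + (t0:ℂ) * y i‖) / ‖y i‖) * ‖y i‖ := by
                rw [hnorme]
                exact add_le_add le_rfl (mul_le_mul_of_nonneg_right hεle (norm_nonneg _))
            _ = 1 := by
                rw [div_mul_cancel₀ _ (norm_ne_zero_iff.mpr hyi)]
                ring
    have := le_csSup hTbdd hmem
    linarith
  obtain ⟨i0, hi0y, hi0⟩ := hnew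
  set x' : Fin N → ℂ := x + (t0:ℂ) • y with hx'
  have hx'E : x' ∈ E := E.add_mem hxE (E.smul_mem _ hyE)
  have hx'le : ∀ i, ‖x' i‖ ≤ 1 := by
    intro i
    simpa [hx'] using ht0T.2 i
  have hxpt : ∀ i, x' i = x i + (t0:ℂ) * y i := fun i => by
    simp [hx', smul_eq_mul]
  have hsub : S x ⊂ S x' := by
    constructor
    · intro i hi
      have hyi := hyS i hi
      have h1 : ‖x i‖ = 1 := by
        simpa [hS] using hi
      have : ‖x' i‖ = 1 := by rw [hxpt i, hyi]; simpa using h1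
      simpa [hS] using this
    · intro hsub'
      have hi0mem : i0 ∈ S x' := by
        have : ‖x' i0‖ = 1 := by rw [hxpt i0]; exact hi0
        simpa [hS] using this
      have hi0x : i0 ∈ S x := hsub' hi0mem
      exact hi0y (hyS i0 hi0x)
  have hcard : (S x).card < (S x').card := Finset.card_lt_card hsub
  have hmemC : (S x').card ∈ C := ⟨x', ⟨hx'E, hx'le⟩, rfl⟩
  have := le_csSup hCbdd hmemC
  omega

lemma holder_sum {ι : Type*} (s : Finset ι) (hs : 0 < s.card) (f : ι → ℝ)
    (hf : ∀ i, 0 ≤ f i) {q p : ℝ} (hq : 0 < q) (hqp : q ≤ p) :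
    ∑ i ∈ s, f i ^ q ≤ (s.card : ℝ) ^ (1 - q / p) * (∑ i ∈ s, f i ^ p) ^ (q / p) := by
  have hp : 0 < p := lt_of_lt_of_le hq hqp
  set n : ℝ := (s.card : ℝ) with hn
  have hn0 : 0 < n := by rw [hn]; exact_mod_cast hs
  have key := Real.arith_mean_le_rpow_mean s (fun _ => 1 / n) (fun i => f i ^ q)
    (fun i _ => (div_pos one_pos hn0).le) (by rw [Finset.sum_const, nsmul_eq_mul]; exact mul_one_div_cancel hn0.ne')
    (fun i _ => Real.rpow_nonneg (hf i) q) ((one_le_div hq).mpr hqp)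
  have hzq : ∀ i, (f i ^ q) ^ (p / q) = f i ^ p := by
    intro i
    rw [← Real.rpow_mul (hf i)]
    congr 1
    field_simp
  simp only [hzq] at key
  rw [← Finset.mul_sum, ← Finset.mul_sum] at key
  rw [show 1 / (p / q) = q / p by rw [one_div, inv_div]] at key
  -- key : (1/n) * ∑ f^q ≤ ((1/n) * ∑ f^p) ^ (q/p)
  have h2 : ((1 / n) * ∑ i ∈ s, f i ^ p) ^ (q / p)
      = (1 / n) ^ (q / p) * (∑ i ∈ s, f i ^ p) ^ (q / p) := by
    rw [Real.mul_rpow (div_pos one_pos hn0).le (Finset.sum_nonneg fun i _ => Real.rpow_nonneg (hf i) p)]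
  rw [h2] at key
  have key2 : ∑ i ∈ s, f i ^ q ≤ n * ((1 / n) ^ (q / p) * (∑ i ∈ s, f i ^ p) ^ (q / p)) := by
    have h3 := mul_le_mul_of_nonneg_left key hn0.le
    calc ∑ i ∈ s, f i ^ q = n * (1 / n * ∑ i ∈ s, f i ^ q) := by
          field_simp
      _ ≤ _ := h3
  calc ∑ i ∈ s, f i ^ q ≤ n * ((1 / n) ^ (q / p) * (∑ i ∈ s, f i ^ p) ^ (q / p)) := key2
    _ = (n * (1/n) ^ (q/p)) * (∑ i ∈ s, f i ^ p) ^ (q / p) := by ring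
    _ = n ^ (1 - q/p) * (∑ i ∈ s, f i ^ p) ^ (q / p) := by
        congr 1
        rw [one_div, Real.inv_rpow hn0.le, Real.rpow_sub hn0, Real.rpow_one]
        field_simp

theorem statement7 (p1 p2 : ℝ≥0∞) [Fact (1 ≤ p1)] [Fact (1 ≤ p2)]
    (hp21 : 1 ≤ p2) (hp : p2 < p1) (N : ℕ) :
    ∀ k : ℕ, 1 ≤ k → k ≤ N →
      approxNumber k (idCLM p1 p2 N) =
        ((N - k + 1 : ℕ) : ℝ) ^ (p2⁻¹.toReal - p1⁻¹.toReal) := by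
  intro k hk1 hkN
  classical
  set m : ℕ := N - k + 1 with hmdef
  have hm1 : 1 ≤ m := by omega
  have hN0 : 0 < N := by omega
  have hp2top : p2 ≠ ∞ := (lt_of_lt_of_le hp le_top).ne
  have hp20 : p2 ≠ 0 := by
    intro h; rw [h] at hp21; exact absurd hp21 (by simp)
  set q : ℝ := p2.toReal with hqdef
  have hq1 : 1 ≤ q := by
    rw [hqdef, ← ENNReal.toReal_one]
    exact ENNReal.toReal_mono hp2top hp21
  have hq0 : 0 < q := lt_of_lt_of_le one_pos hq1
  set r : ℝ := p2⁻¹.toReal - p1⁻¹.toReal with hrdef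
  have hrq : p2⁻¹.toReal = 1/q := by rw [ENNReal.toReal_inv, one_div]
  have hr0 : 0 ≤ r := by
    rw [hrdef]
    have h1 : p1⁻¹ ≤ p2⁻¹ := ENNReal.inv_le_inv.mpr hp.le
    have h2 : p2⁻¹ ≠ ∞ := ENNReal.inv_ne_top.mpr hp20
    linarith [ENNReal.toReal_mono h2 h1]
  set v : ℝ := (m : ℝ) ^ r with hvdef
  have hv0 : 0 ≤ v := Real.rpow_nonneg (Nat.cast_nonneg m) r
  -- norm formula for the p2 side
  have hq2pos : 0 < p2.toReal := ENNReal.toReal_pos hp20 hp2top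
  have hnormq : ∀ z : Fin N → ℂ,
      ‖(WithLp.equiv p2 (∀ _ : Fin N, ℂ)).symm z‖ = (∑ i, ‖z i‖ ^ q) ^ (1/q) := by
    intro z
    rw [PiLp.norm_eq_sum hq2pos]
    simp only [WithLp.equiv_symm_apply, PiLp.toLp_apply]
    rfl
  -- the lower bound norm inequality
  have lbnorm : ∀ z : Fin N → ℂ, (∀ i, ‖z i‖ ≤ 1) →
      (m : ℝ) ≤ (Finset.univ.filter fun i => ‖z i‖ = 1).card →
      v * ‖(WithLp.equiv p1 (∀ _ : Fin N, ℂ)).symm z‖ ≤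
        ‖(WithLp.equiv p2 (∀ _ : Fin N, ℂ)).symm z‖ := by
    intro z hzle hzcard
    set Sq : ℝ := ∑ i, ‖z i‖ ^ q with hSqdef
    have hSq : (m:ℝ) ≤ Sq := by
      refine le_trans hzcard ?_
      rw [hSqdef]
      calc ((Finset.univ.filter fun i => ‖z i‖ = 1).card : ℝ)
          = ∑ i ∈ Finset.univ.filter fun i => ‖z i‖ = 1, ‖z i‖ ^ q := by
            rw [Finset.sum_congr rfl (fun i hi => ?_), Finset.sum_const, nsmul_eq_mul, mul_one]
            rw [(Finset.mem_filter.mp hi).2, Real.one_rpow]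
        _ ≤ ∑ i, ‖z i‖ ^ q := Finset.sum_le_sum_of_subset_of_nonneg
            (Finset.subset_univ _) (fun i _ _ => Real.rpow_nonneg (norm_nonneg _) q)
    have hSqpos : (0:ℝ) < Sq := lt_of_lt_of_le (by exact_mod_cast hm1) hSq
    rw [hnormq z]
    by_cases hp1top : p1 = ∞
    · have hX1le : ‖(WithLp.equiv p1 (∀ _ : Fin N, ℂ)).symm z‖ ≤ 1 := by
        subst hp1top
        rw [PiLp.norm_eq_ciSup]
        have : Nonempty (Fin N) := Fin.pos_iff_nonempty.mp hN0
        exact ciSup_le (fun i => by simpa [WithLp.equiv_symm_apply, PiLp.toLp_apply] using hzle i)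
      have hveq : v = (m:ℝ) ^ (1/q) := by
        rw [hvdef, hrdef, hrq, hp1top]
        norm_num
      calc v * ‖(WithLp.equiv p1 (∀ _ : Fin N, ℂ)).symm z‖ ≤ v * 1 := by
            exact mul_le_mul_of_nonneg_left hX1le hv0
        _ = (m:ℝ) ^ (1/q) := by rw [mul_one, hveq]
        _ ≤ Sq ^ (1/q) := Real.rpow_le_rpow (Nat.cast_nonneg m) hSq (by positivity)
    · set p : ℝ := p1.toReal with hpdef
      have hqp : q ≤ p := by
        rw [hqdef, hpdef]
        exact ENNReal.toReal_mono hp1top hp.le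
      have hppos : 0 < p := lt_of_lt_of_le hq0 hqp
      have hrval : r = 1/q - 1/p := by
        rw [hrdef, hrq, ENNReal.toReal_inv, ← hpdef]
        ring
      have hX1 : ‖(WithLp.equiv p1 (∀ _ : Fin N, ℂ)).symm z‖ = (∑ i, ‖z i‖ ^ p) ^ (1/p) := by
        rw [PiLp.norm_eq_sum (by rw [← hpdef]; exact hppos)]
        simp only [WithLp.equiv_symm_apply, PiLp.toLp_apply]
        rfl
      have hSple : ∑ i, ‖z i‖ ^ p ≤ Sq := by
        rw [hSqdef]
        refine Finset.sum_le_sum (fun i _ => ?_)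
        exact Real.rpow_le_rpow_of_exponent_ge' (norm_nonneg _) (hzle i) hq0.le hqp
      have hX1le : ‖(WithLp.equiv p1 (∀ _ : Fin N, ℂ)).symm z‖ ≤ Sq ^ (1/p) := by
        rw [hX1]
        exact Real.rpow_le_rpow (Finset.sum_nonneg fun i _ => Real.rpow_nonneg (norm_nonneg _) p)
          hSple (by positivity)
      calc v * ‖(WithLp.equiv p1 (∀ _ : Fin N, ℂ)).symm z‖
          ≤ v * Sq ^ (1/p) := mul_le_mul_of_nonneg_left hX1le hv0
        _ ≤ Sq ^ r * Sq ^ (1/p) := by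
            refine mul_le_mul_of_nonneg_right ?_ (by positivity)
            rw [hvdef]
            exact Real.rpow_le_rpow (Nat.cast_nonneg m) hSq hr0
        _ = Sq ^ (1/q) := by
            rw [← Real.rpow_add hSqpos, hrval]
            norm_num
  -- upper bound construction
  obtain ⟨F, -, hFcard⟩ := Finset.exists_subset_card_eq
    (s := (Finset.univ : Finset (Fin N))) (n := k - 1) (by simp; omega)
  have hFccard : Fᶜ.card = m := by
    rw [Finset.card_compl, hFcard]
    simp only [Fintype.card_fin]
    omega
  -- the upper bound norm inequality
  have ubnorm : ∀ z : Fin N → ℂ,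
      ‖(WithLp.equiv p2 (∀ _ : Fin N, ℂ)).symm (fun i => if i ∈ F then 0 else z i)‖ ≤
        v * ‖(WithLp.equiv p1 (∀ _ : Fin N, ℂ)).symm z‖ := by
    intro z
    set g : Fin N → ℂ := fun i => if i ∈ F then 0 else z i with hgdef
    have hsum : ∑ i, ‖g i‖ ^ q = ∑ i ∈ Fᶜ, ‖z i‖ ^ q := by
      rw [← Finset.sum_add_sum_compl F]
      have h1 : ∑ i ∈ F, ‖g i‖ ^ q = 0 :=
        Finset.sum_eq_zero fun i hi => by
          simp [hgdef, hi, Real.zero_rpow hq0.ne']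
      have h2 : ∑ i ∈ Fᶜ, ‖g i‖ ^ q = ∑ i ∈ Fᶜ, ‖z i‖ ^ q :=
        Finset.sum_congr rfl fun i hi => by
          simp [hgdef, Finset.mem_compl.mp hi]
      rw [h1, h2, zero_add]
    rw [hnormq g, hsum]
    by_cases hp1top : p1 = ∞
    · have hveq : v = (m:ℝ) ^ (1/q) := by
        rw [hvdef, hrdef, hrq, hp1top]
        norm_num
      set M : ℝ := ‖(WithLp.equiv p1 (∀ _ : Fin N, ℂ)).symm z‖ with hMdef
      have hM0 : 0 ≤ M := norm_nonneg _
      have hzleM : ∀ i, ‖z i‖ ≤ M := by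
        intro i
        rw [hMdef]
        subst hp1top
        rw [PiLp.norm_eq_ciSup]
        exact le_ciSup (f := fun i => ‖((WithLp.equiv ∞ (∀ _ : Fin N, ℂ)).symm z) i‖)
          (Finite.bddAbove_range _) i
      have hsumle : ∑ i ∈ Fᶜ, ‖z i‖ ^ q ≤ (m:ℝ) * M ^ q := by
        calc ∑ i ∈ Fᶜ, ‖z i‖ ^ q ≤ ∑ _i ∈ Fᶜ, M ^ q :=
              Finset.sum_le_sum fun i _ =>
                Real.rpow_le_rpow (norm_nonneg _) (hzleM i) hq0.le
          _ = (m:ℝ) * M ^ q := by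
              rw [Finset.sum_const, hFccard, nsmul_eq_mul]
      calc (∑ i ∈ Fᶜ, ‖z i‖ ^ q) ^ (1/q) ≤ ((m:ℝ) * M ^ q) ^ (1/q) :=
            Real.rpow_le_rpow (Finset.sum_nonneg fun i _ =>
              Real.rpow_nonneg (norm_nonneg _) q) hsumle (by positivity)
        _ = (m:ℝ) ^ (1/q) * M := by
            rw [Real.mul_rpow (Nat.cast_nonneg m) (Real.rpow_nonneg hM0 q),
              ← Real.rpow_mul hM0]
            rw [mul_one_div, div_self hq0.ne', Real.rpow_one]
        _ = v * M := by rw [hveq]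
    · set p : ℝ := p1.toReal with hpdef
      have hqp : q ≤ p := by
        rw [hqdef, hpdef]
        exact ENNReal.toReal_mono hp1top hp.le
      have hppos : 0 < p := lt_of_lt_of_le hq0 hqp
      have hrval : r = 1/q - 1/p := by
        rw [hrdef, hrq, ENNReal.toReal_inv, ← hpdef]
        ring
      set Sp : ℝ := ∑ i, ‖z i‖ ^ p with hSpdef
      have hSp0 : 0 ≤ Sp := Finset.sum_nonneg fun i _ => Real.rpow_nonneg (norm_nonneg _) p
      have hX1 : ‖(WithLp.equiv p1 (∀ _ : Fin N, ℂ)).symm z‖ = Sp ^ (1/p) := by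
        rw [PiLp.norm_eq_sum (by rw [← hpdef]; exact hppos)]
        simp only [WithLp.equiv_symm_apply, PiLp.toLp_apply]
        rfl
      have hcardpos : 0 < Fᶜ.card := by omega
      have hhold := holder_sum Fᶜ hcardpos (fun i => ‖z i‖) (fun i => norm_nonneg _) hq0 hqp
      rw [hFccard] at hhold
      have hsub : ∑ i ∈ Fᶜ, ‖z i‖ ^ p ≤ Sp :=
        Finset.sum_le_sum_of_subset_of_nonneg (Finset.subset_univ _)
          (fun i _ _ => Real.rpow_nonneg (norm_nonneg _) p)
      have hhold2 : ∑ i ∈ Fᶜ, ‖z i‖ ^ q ≤ (m:ℝ) ^ (1 - q/p) * Sp ^ (q/p) := by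
        refine le_trans hhold ?_
        refine mul_le_mul_of_nonneg_left ?_ (Real.rpow_nonneg (Nat.cast_nonneg m) _)
        exact Real.rpow_le_rpow (Finset.sum_nonneg fun i _ =>
          Real.rpow_nonneg (norm_nonneg _) p) hsub (by positivity)
      calc (∑ i ∈ Fᶜ, ‖z i‖ ^ q) ^ (1/q)
          ≤ ((m:ℝ) ^ (1 - q/p) * Sp ^ (q/p)) ^ (1/q) :=
            Real.rpow_le_rpow (Finset.sum_nonneg fun i _ =>
              Real.rpow_nonneg (norm_nonneg _) q) hhold2 (by positivity)
        _ = v * Sp ^ (1/p) := by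
            rw [Real.mul_rpow (Real.rpow_nonneg (Nat.cast_nonneg m) _)
              (Real.rpow_nonneg hSp0 _), ← Real.rpow_mul (Nat.cast_nonneg m),
              ← Real.rpow_mul hSp0, hvdef, hrval]
            congr 1
            · congr 1
              rw [sub_mul, one_mul, mul_one_div, div_div, mul_comm p q, ← div_div,
                div_self hq0.ne']
            · congr 1
              rw [mul_one_div, div_div, mul_comm p q, ← div_div, div_self hq0.ne']
        _ = v * ‖(WithLp.equiv p1 (∀ _ : Fin N, ℂ)).symm z‖ := by rw [hX1]
  -- the finite rank operator
  set Rmap : PiLp p1 (fun _ : Fin N => ℂ) →ₗ[ℂ] (↥F → ℂ) :=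
    (LinearMap.pi fun i : ↥F => LinearMap.proj (i : Fin N)) ∘ₗ
      (WithLp.linearEquiv p1 ℂ (∀ _ : Fin N, ℂ)).toLinearMap with hRmap
  set Jmap : (↥F → ℂ) →ₗ[ℂ] PiLp p2 (fun _ : Fin N => ℂ) :=
    (WithLp.linearEquiv p2 ℂ (∀ _ : Fin N, ℂ)).symm.toLinearMap ∘ₗ
      (LinearMap.pi fun i : Fin N =>
        if h : i ∈ F then LinearMap.proj (⟨i, h⟩ : ↥F) else 0) with hJmap
  set A0 : PiLp p1 (fun _ : Fin N => ℂ) →L[ℂ] PiLp p2 (fun _ : Fin N => ℂ) :=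
    LinearMap.toContinuousLinearMap (Jmap ∘ₗ Rmap) with hA0
  have hA0rank : Module.rank ℂ
      (LinearMap.range ((A0 : PiLp p1 (fun _ : Fin N => ℂ) →ₗ[ℂ]
        PiLp p2 (fun _ : Fin N => ℂ)))) < (k : Cardinal) := by
    have hcoe : ((A0 : PiLp p1 (fun _ : Fin N => ℂ) →ₗ[ℂ] PiLp p2 (fun _ : Fin N => ℂ)))
        = Jmap ∘ₗ Rmap := LinearMap.coe_toContinuousLinearMap _
    rw [hcoe]
    have h1 : LinearMap.range (Jmap ∘ₗ Rmap) ≤ LinearMap.range Jmap :=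
      LinearMap.range_comp_le_range _ _
    have h2 := Submodule.rank_mono h1
    have h3 : Module.rank ℂ (LinearMap.range Jmap) ≤ Module.rank ℂ (↥F → ℂ) :=
      LinearMap.rank_le_domain Jmap
    have h4 : Module.rank ℂ (↥F → ℂ) = (F.card : Cardinal) := by
      rw [rank_fun']
      simp [Fintype.card_coe]
    have h5 : (F.card : Cardinal) < (k : Cardinal) := by
      have h6 : F.card < k := by omega
      exact_mod_cast h6
    exact lt_of_le_of_lt (le_trans h2 h3) (h4 ▸ h5)
  have hA0app : ∀ z : Fin N → ℂ,
      (idCLM p1 p2 N - A0) ((WithLp.equiv p1 (∀ _ : Fin N, ℂ)).symm z) =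
        (WithLp.equiv p2 (∀ _ : Fin N, ℂ)).symm (fun i => if i ∈ F then 0 else z i) := by
    intro z
    rw [ContinuousLinearMap.sub_apply]
    have hT : idCLM p1 p2 N ((WithLp.equiv p1 (∀ _ : Fin N, ℂ)).symm z) =
        (WithLp.equiv p2 (∀ _ : Fin N, ℂ)).symm z := rfl
    have hA : A0 ((WithLp.equiv p1 (∀ _ : Fin N, ℂ)).symm z) =
        (WithLp.equiv p2 (∀ _ : Fin N, ℂ)).symm (fun i => if h : i ∈ F then z i else 0) := by
      rw [Equiv.eq_symm_apply]
      funext i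
      by_cases h : i ∈ F <;>
        simp [hA0, hJmap, hRmap, LinearMap.coe_toContinuousLinearMap',
          LinearMap.comp_apply, LinearMap.pi_apply, h]
    rw [hT, hA]
    have hsub : (WithLp.equiv p2 (∀ _ : Fin N, ℂ)).symm z -
        (WithLp.equiv p2 (∀ _ : Fin N, ℂ)).symm (fun i => if h : i ∈ F then z i else 0) =
        (WithLp.equiv p2 (∀ _ : Fin N, ℂ)).symm
          (z - fun i => if h : i ∈ F then z i else 0) := by
      exact ((WithLp.linearEquiv p2 ℂ (∀ _ : Fin N, ℂ)).symm.map_sub _ _).symm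
    rw [hsub]
    congr 1
    funext i
    by_cases h : i ∈ F <;> simp [h]
  have hTA_norm : ‖idCLM p1 p2 N - A0‖ ≤ v := by
    refine ContinuousLinearMap.opNorm_le_bound _ hv0 (fun X => ?_)
    have hXz : X = (WithLp.equiv p1 (∀ _ : Fin N, ℂ)).symm
        ((WithLp.equiv p1 (∀ _ : Fin N, ℂ)) X) := (Equiv.symm_apply_apply _ _).symm
    rw [hXz, hA0app]
    exact ubnorm _
  -- lower bound for every admissible operator
  have hlower : ∀ c ∈ {c : ℝ | ∃ A : PiLp p1 (fun _ : Fin N => ℂ) →L[ℂ]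
        PiLp p2 (fun _ : Fin N => ℂ),
      Module.rank ℂ (LinearMap.range (A : PiLp p1 (fun _ : Fin N => ℂ) →ₗ[ℂ]
        PiLp p2 (fun _ : Fin N => ℂ))) < (k : Cardinal) ∧ c = ‖idCLM p1 p2 N - A‖},
      v ≤ c := by
    rintro c ⟨A, hArank, rfl⟩
    set A' : PiLp p1 (fun _ : Fin N => ℂ) →ₗ[ℂ] PiLp p2 (fun _ : Fin N => ℂ) :=
      (A : PiLp p1 (fun _ : Fin N => ℂ) →ₗ[ℂ] PiLp p2 (fun _ : Fin N => ℂ)) with hA'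
    have hfinrank_dom : Module.finrank ℂ (PiLp p1 (fun _ : Fin N => ℂ)) = N := by
      rw [(WithLp.linearEquiv p1 ℂ (∀ _ : Fin N, ℂ)).finrank_eq]
      simp [Module.finrank_fintype_fun_eq_card]
    have hrange_lt : Module.finrank ℂ (LinearMap.range A') < k := by
      have h := hArank
      rw [← Module.finrank_eq_rank] at h
      exact_mod_cast h
    have hker_ge : m ≤ Module.finrank ℂ (LinearMap.ker A') := by
      have h := LinearMap.finrank_range_add_finrank_ker A'
      rw [hfinrank_dom] at h
      omega
    set E : Submodule ℂ (Fin N → ℂ) :=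
      (LinearMap.ker A').map (WithLp.linearEquiv p1 ℂ (∀ _ : Fin N, ℂ)).toLinearMap with hE
    have hEfr : m ≤ Module.finrank ℂ E := by
      have e2 := Submodule.equivMapOfInjective
        (WithLp.linearEquiv p1 ℂ (∀ _ : Fin N, ℂ)).toLinearMap
        (WithLp.linearEquiv p1 ℂ (∀ _ : Fin N, ℂ)).injective (LinearMap.ker A')
      rw [hE, ← e2.finrank_eq]
      exact hker_ge
    obtain ⟨x, hxE, hxle, hxcard⟩ := exists_flat_vector hm1 E hEfr
    have hxcard' : (Finset.univ.filter fun i => ‖x i‖ = 1).Nonempty :=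
      Finset.card_pos.mp (by omega)
    obtain ⟨i1, hi1⟩ := hxcard'
    have hi1' : ‖x i1‖ = 1 := (Finset.mem_filter.mp hi1).2
    set X1 : PiLp p1 (fun _ : Fin N => ℂ) := (WithLp.equiv p1 (∀ _ : Fin N, ℂ)).symm x
      with hX1def
    have hX1pos : 0 < ‖X1‖ := by
      rw [norm_pos_iff]
      intro h0
      have hx0 : x = 0 := by
        have := congrArg (WithLp.equiv p1 (∀ _ : Fin N, ℂ)) h0
        simpa [hX1def] using this
      rw [hx0] at hi1'
      simp at hi1'
    obtain ⟨w, hwker, hwx⟩ := Submodule.mem_map.mp hxE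
    have hX1w : X1 = w := by
      rw [hX1def, ← hwx]
      exact (WithLp.equiv p1 (∀ _ : Fin N, ℂ)).symm_apply_apply w
    have hX1ker : A X1 = 0 := by
      rw [hX1w]
      exact LinearMap.mem_ker.mp hwker
    have happ : (idCLM p1 p2 N - A) X1 = (WithLp.equiv p2 (∀ _ : Fin N, ℂ)).symm x := by
      rw [ContinuousLinearMap.sub_apply, hX1ker, sub_zero]
      rfl
    have hle := (idCLM p1 p2 N - A).le_opNorm X1
    rw [happ] at hle
    have hlb := lbnorm x hxle (Nat.cast_le.mpr hxcard)
    have hchain : v * ‖X1‖ ≤ ‖idCLM p1 p2 N - A‖ * ‖X1‖ := le_trans hlb hle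
    exact le_of_mul_le_mul_right hchain hX1pos
  -- conclude
  show sInf _ = v
  apply le_antisymm
  · exact le_trans (csInf_le ⟨v, fun c hc => hlower c hc⟩ ⟨A0, hA0rank, rfl⟩) hTA_norm
  · exact le_csInf ⟨_, ⟨A0, hA0rank, rfl⟩⟩ hlower
end
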